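/- arXiv:0907.0314 — 2 statements merged into one kernel-verified Lean document; each statement's English description precedes it below -/
import Mathlib

section
/- The monoid M₂(ℝ̄) of all 2 × 2 tropical matrices is regular: for every A ∈ M₂(ℝ̄) there exists B ∈ M₂(ℝ̄) such that A ⊗ B ⊗ A = A. -/
open scoped Classical ENNReal

/-- The tropical semiring `ℝ̄ = ℝ ∪ {-∞}`, carried by `WithBot ℝ`;
tropical addition is `max` and tropical multiplication is `+`. -/
abbrev Rb : Type := WithBot ℝ

/-- Tropical matrix multiplication. -/
noncomputable def tMul {n : ℕ} (A B : Fin n → Fin n → Rb) : Fin n → Fin n → Rb :=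
  fun i j => Finset.univ.sup fun k => A i k + B k j

/-- The column space of a matrix: all tropical linear combinations of its columns. -/
def ColSpace {n : ℕ} (A : Fin n → Fin n → Rb) : Set (Fin n → Rb) :=
  {v | ∃ c : Fin n → Rb, ∀ i, v i = Finset.univ.sup fun j => c j + A i j}

/-- The row space of a matrix: all tropical linear combinations of its rows. -/
def RowSpace {n : ℕ} (A : Fin n → Fin n → Rb) : Set (Fin n → Rb) :=
  {v | ∃ c : Fin n → Rb, ∀ j, v j = Finset.univ.sup fun i => c i + A i j}

abbrev Mat2 : Type := Fin 2 → Fin 2 → Rb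

/-- Inclusion of `ℝ̄` into the projective line `ℝ̂ = ℝ ∪ {-∞, +∞}` (modelled by `EReal`). -/
noncomputable def toE : Rb → EReal := WithBot.recBotCoe ⊥ (fun r : ℝ => (r : EReal))

/-- Projection of a vector `(a, b)` to `b - a ∈ ℝ̂`. -/
noncomputable def projPt (v : Fin 2 → Rb) : EReal := toE (v 1) - toE (v 0)

def zeroVec : Fin 2 → Rb := fun _ => ⊥

/-- Projective column space. -/
noncomputable def PC (A : Mat2) : Set EReal :=
  {z | ∃ v ∈ ColSpace A, v ≠ zeroVec ∧ projPt v = z}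

/-- Projective row space. -/
noncomputable def PR (A : Mat2) : Set EReal :=
  {z | ∃ v ∈ RowSpace A, v ≠ zeroVec ∧ projPt v = z}

/-- The metric `δ` on `ℝ̂`. -/
noncomputable def delta (x y : EReal) : ℝ≥0∞ :=
  if (∃ a : ℝ, x = (a : EReal)) ∧ (∃ b : ℝ, y = (b : EReal)) then
    ENNReal.ofReal |x.toReal - y.toReal|
  else if x = y then 0 else ⊤

/-- `M` embeds isometrically into `N`. -/
def IsomEmbed (M N : Set EReal) : Prop :=
  ∃ f : EReal → EReal, Set.MapsTo f M N ∧ Set.InjOn f M ∧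
    ∀ x ∈ M, ∀ y ∈ M, delta (f x) (f y) = delta x y

/-- `M` and `N` are isometric. -/
def Isom (M N : Set EReal) : Prop :=
  ∃ f : EReal → EReal, Set.BijOn f M N ∧
    ∀ x ∈ M, ∀ y ∈ M, delta (f x) (f y) = delta x y

/-- Closed convex subsets of `ℝ̂`: the empty set, singletons and closed intervals. -/
def IsClosedConvex (S : Set EReal) : Prop :=
  S = ∅ ∨ ∃ x y : EReal, x ≤ y ∧ S = Set.Icc x y

/- helpers -/
private def nnegT (x : Rb) : Rb := x.map (fun t => -t)

private lemma trop_sup2 (f : Fin 2 → Rb) : Finset.univ.sup f = f 0 ⊔ f 1 := by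
  rw [show (Finset.univ : Finset (Fin 2)) = {0, 1} from rfl]
  simp [Finset.sup_insert, Finset.sup_singleton]

private lemma trop_sup_add (x y z : Rb) : (x ⊔ y) + z = (x + z) ⊔ (y + z) := by
  rcases le_total x y with h|h
  · rw [sup_eq_right.2 h, sup_eq_right.2 (add_le_add_left h z)]
  · rw [sup_eq_left.2 h, sup_eq_left.2 (add_le_add_left h z)]

private lemma trop_coe_cancel (t : Rb) (r : ℝ) : (t + ↑r) + (↑(-r) : Rb) = t := by
  rw [add_assoc, ← WithBot.coe_add, add_neg_cancel, WithBot.coe_zero, add_zero]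

private lemma trop_step (p q s t : Rb) (r : ℝ) (h : (p + q) + s ≤ t + ↑r) :
    (p + (q + (↑(-r) : Rb))) + s ≤ t := by
  have e : (p + (q + (↑(-r) : Rb))) + s = ((p + q) + s) + ↑(-r) := by abel
  rw [e]
  have := add_le_add_left h ((↑(-r) : Rb))
  rwa [trop_coe_cancel] at this

private lemma trop_stepeq (p q s t : Rb) (r : ℝ) (h : (p + q) + s = t + ↑r) :
    (p + (q + (↑(-r) : Rb))) + s = t := by
  have e : (p + (q + (↑(-r) : Rb))) + s = ((p + q) + s) + ↑(-r) := by abel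
  rw [e, h, trop_coe_cancel]

private lemma trop_pair (x y s : Rb) (r : ℝ) (h : x + y ≤ ↑r) : (x + y) + s ≤ s + ↑r :=
  le_trans (add_le_add_left h s) (le_of_eq (add_comm _ _))

private lemma trop_pair' (x y s : Rb) (r : ℝ) (h : x + y ≤ ↑r) : (s + x) + y ≤ s + ↑r := by
  rw [add_assoc]; exact add_le_add_right h s

private lemma trop_pair'' (x y s : Rb) (r : ℝ) (h : x + y ≤ ↑r) : (x + s) + y ≤ s + ↑r := by
  have e : (x + s) + y = s + (x + y) := by abel
  rw [e]; exact add_le_add_right h s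

private lemma trop_paireq (x y s : Rb) (r : ℝ) (h : x + y = ↑r) : (x + y) + s = s + ↑r := by
  rw [h, add_comm]

private lemma trop_paireq' (x y s : Rb) (r : ℝ) (h : x + y = ↑r) : (s + x) + y = s + ↑r := by
  rw [add_assoc, h]

private lemma trop_paireq'' (x y s : Rb) (r : ℝ) (h : x + y = ↑r) : (x + s) + y = s + ↑r := by
  have e : (x + s) + y = s + (x + y) := by abel
  rw [e, h]

private lemma trop_nself (x y : Rb) : (x + nnegT x) + y ≤ y := by
  have h : x + nnegT x ≤ 0 := by
    induction x using WithBot.recBotCoe with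
    | bot => simp [nnegT]
    | coe v => simp [nnegT, WithBot.map_coe, ← WithBot.coe_add]
  calc (x + nnegT x) + y ≤ 0 + y := add_le_add_left h y
    _ = y := zero_add y

private lemma trop_nself' (x y : Rb) : (y + nnegT x) + x ≤ y := by
  have e : (y + nnegT x) + x = (x + nnegT x) + y := by abel
  rw [e]; exact trop_nself x y

private lemma trop_botle (x y z w : Rb) (h : x + y = ⊥) : (x + nnegT z) + y ≤ w := by
  have e : (x + nnegT z) + y = (x + y) + nnegT z := by abel
  rw [e, h, WithBot.bot_add]
  exact bot_le

private lemma trop_ge (x : Rb) : x ≤ (x + nnegT x) + x := by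
  induction x using WithBot.recBotCoe with
  | bot => simp
  | coe v => simp [nnegT, WithBot.map_coe, ← WithBot.coe_add]

/-- the monoid `M₂(ℝ̄)` of `2 × 2` tropical matrices is (von Neumann)
regular: every `A` satisfies `A ⊗ B ⊗ A = A` for some `B`. -/
theorem mat2_regular (A : Mat2) : ∃ B : Mat2, tMul (tMul A B) A = A := by
  obtain ⟨hb1, hb2⟩ | ⟨r, hr⟩ :
      ((A 0 0 + A 1 1) = ⊥ ∧ (A 0 1 + A 1 0) = ⊥) ∨
      (∃ r : ℝ, (A 0 0 + A 1 1) ⊔ (A 0 1 + A 1 0) = ↑r) := by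
    by_cases hbot : (A 0 0 + A 1 1) ⊔ (A 0 1 + A 1 0) = ⊥
    · exact Or.inl (sup_eq_bot_iff.1 hbot)
    · obtain ⟨r, hr⟩ := WithBot.ne_bot_iff_exists.1 hbot
      exact Or.inr ⟨r, hr.symm⟩
  · -- degenerate case: B = -Aᵀ entrywise
    refine ⟨fun k l => nnegT (A l k), ?_⟩
    funext i j
    fin_cases i <;> fin_cases j <;>
    · simp only [tMul, trop_sup2, Fin.isValue]
      rw [trop_sup_add, trop_sup_add]
      refine le_antisymm (sup_le (sup_le ?_ ?_) (sup_le ?_ ?_)) ?_ <;>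
      first
        | exact trop_nself _ _
        | exact trop_nself' _ _
        | exact trop_botle _ _ _ _ hb1
        | exact trop_botle _ _ _ _ hb2
        | exact trop_botle _ _ _ _ (by rw [add_comm]; exact hb1)
        | exact trop_botle _ _ _ _ (by rw [add_comm]; exact hb2)
        | exact le_trans (trop_ge _) (le_sup_of_le_left le_sup_left)
        | exact le_trans (trop_ge _) (le_sup_of_le_left le_sup_right)
        | exact le_trans (trop_ge _) (le_sup_of_le_right le_sup_left)
        | exact le_trans (trop_ge _) (le_sup_of_le_right le_sup_right)
  · -- main case
    have h1 : A 0 0 + A 1 1 ≤ (↑r : Rb) := le_sup_left.trans hr.le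
    have h2 : A 0 1 + A 1 0 ≤ (↑r : Rb) := le_sup_right.trans hr.le
    have h1' : A 1 1 + A 0 0 ≤ (↑r : Rb) := by rw [add_comm]; exact h1
    have h2' : A 1 0 + A 0 1 ≤ (↑r : Rb) := by rw [add_comm]; exact h2
    have hor : A 0 0 + A 1 1 = (↑r : Rb) ∨ A 0 1 + A 1 0 = (↑r : Rb) := by
      rcases le_total (A 0 0 + A 1 1) (A 0 1 + A 1 0) with h|h
      · exact Or.inr (by rw [← hr, sup_eq_right.2 h])
      · exact Or.inl (by rw [← hr, sup_eq_left.2 h])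
    refine ⟨![![A 1 1 + ↑(-r), A 0 1 + ↑(-r)], ![A 1 0 + ↑(-r), A 0 0 + ↑(-r)]], ?_⟩
    funext i j
    fin_cases i <;> fin_cases j <;>
    · simp only [tMul, trop_sup2, Fin.isValue, Matrix.cons_val_zero, Matrix.cons_val_one,
        Matrix.head_cons]
      rw [trop_sup_add, trop_sup_add]
      refine le_antisymm (sup_le (sup_le ?_ ?_) (sup_le ?_ ?_)) ?_
      ·  first
          | exact trop_step _ _ _ _ _ (trop_pair _ _ _ _ h1)
          | exact trop_step _ _ _ _ _ (trop_pair _ _ _ _ h2)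
          | exact trop_step _ _ _ _ _ (trop_pair _ _ _ _ h1')
          | exact trop_step _ _ _ _ _ (trop_pair _ _ _ _ h2')
          | exact trop_step _ _ _ _ _ (trop_pair' _ _ _ _ h1)
          | exact trop_step _ _ _ _ _ (trop_pair' _ _ _ _ h2)
          | exact trop_step _ _ _ _ _ (trop_pair' _ _ _ _ h1')
          | exact trop_step _ _ _ _ _ (trop_pair' _ _ _ _ h2')
          | exact trop_step _ _ _ _ _ (trop_pair'' _ _ _ _ h1)
          | exact trop_step _ _ _ _ _ (trop_pair'' _ _ _ _ h2)
          | exact trop_step _ _ _ _ _ (trop_pair'' _ _ _ _ h1')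
          | exact trop_step _ _ _ _ _ (trop_pair'' _ _ _ _ h2')
      ·  first
          | exact trop_step _ _ _ _ _ (trop_pair _ _ _ _ h1)
          | exact trop_step _ _ _ _ _ (trop_pair _ _ _ _ h2)
          | exact trop_step _ _ _ _ _ (trop_pair _ _ _ _ h1')
          | exact trop_step _ _ _ _ _ (trop_pair _ _ _ _ h2')
          | exact trop_step _ _ _ _ _ (trop_pair' _ _ _ _ h1)
          | exact trop_step _ _ _ _ _ (trop_pair' _ _ _ _ h2)
          | exact trop_step _ _ _ _ _ (trop_pair' _ _ _ _ h1')
          | exact trop_step _ _ _ _ _ (trop_pair' _ _ _ _ h2')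
          | exact trop_step _ _ _ _ _ (trop_pair'' _ _ _ _ h1)
          | exact trop_step _ _ _ _ _ (trop_pair'' _ _ _ _ h2)
          | exact trop_step _ _ _ _ _ (trop_pair'' _ _ _ _ h1')
          | exact trop_step _ _ _ _ _ (trop_pair'' _ _ _ _ h2')
      ·  first
          | exact trop_step _ _ _ _ _ (trop_pair _ _ _ _ h1)
          | exact trop_step _ _ _ _ _ (trop_pair _ _ _ _ h2)
          | exact trop_step _ _ _ _ _ (trop_pair _ _ _ _ h1')
          | exact trop_step _ _ _ _ _ (trop_pair _ _ _ _ h2')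
          | exact trop_step _ _ _ _ _ (trop_pair' _ _ _ _ h1)
          | exact trop_step _ _ _ _ _ (trop_pair' _ _ _ _ h2)
          | exact trop_step _ _ _ _ _ (trop_pair' _ _ _ _ h1')
          | exact trop_step _ _ _ _ _ (trop_pair' _ _ _ _ h2')
          | exact trop_step _ _ _ _ _ (trop_pair'' _ _ _ _ h1)
          | exact trop_step _ _ _ _ _ (trop_pair'' _ _ _ _ h2)
          | exact trop_step _ _ _ _ _ (trop_pair'' _ _ _ _ h1')
          | exact trop_step _ _ _ _ _ (trop_pair'' _ _ _ _ h2')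
      ·  first
          | exact trop_step _ _ _ _ _ (trop_pair _ _ _ _ h1)
          | exact trop_step _ _ _ _ _ (trop_pair _ _ _ _ h2)
          | exact trop_step _ _ _ _ _ (trop_pair _ _ _ _ h1')
          | exact trop_step _ _ _ _ _ (trop_pair _ _ _ _ h2')
          | exact trop_step _ _ _ _ _ (trop_pair' _ _ _ _ h1)
          | exact trop_step _ _ _ _ _ (trop_pair' _ _ _ _ h2)
          | exact trop_step _ _ _ _ _ (trop_pair' _ _ _ _ h1')
          | exact trop_step _ _ _ _ _ (trop_pair' _ _ _ _ h2')
          | exact trop_step _ _ _ _ _ (trop_pair'' _ _ _ _ h1)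
          | exact trop_step _ _ _ _ _ (trop_pair'' _ _ _ _ h2)
          | exact trop_step _ _ _ _ _ (trop_pair'' _ _ _ _ h1')
          | exact trop_step _ _ _ _ _ (trop_pair'' _ _ _ _ h2')
      ·  rcases hor with h|h <;>
         first
           | exact (le_sup_of_le_left (le_sup_of_le_left (le_of_eq (trop_stepeq _ _ _ _ _ (trop_paireq _ _ _ _ h)).symm)))
           | exact (le_sup_of_le_left (le_sup_of_le_left (le_of_eq (trop_stepeq _ _ _ _ _ (trop_paireq _ _ _ _ (by rw [add_comm]; exact h))).symm)))
           | exact (le_sup_of_le_left (le_sup_of_le_left (le_of_eq (trop_stepeq _ _ _ _ _ (trop_paireq' _ _ _ _ h)).symm)))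
           | exact (le_sup_of_le_left (le_sup_of_le_left (le_of_eq (trop_stepeq _ _ _ _ _ (trop_paireq' _ _ _ _ (by rw [add_comm]; exact h))).symm)))
           | exact (le_sup_of_le_left (le_sup_of_le_left (le_of_eq (trop_stepeq _ _ _ _ _ (trop_paireq'' _ _ _ _ h)).symm)))
           | exact (le_sup_of_le_left (le_sup_of_le_left (le_of_eq (trop_stepeq _ _ _ _ _ (trop_paireq'' _ _ _ _ (by rw [add_comm]; exact h))).symm)))
           | exact (le_sup_of_le_left (le_sup_of_le_right (le_of_eq (trop_stepeq _ _ _ _ _ (trop_paireq _ _ _ _ h)).symm)))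
           | exact (le_sup_of_le_left (le_sup_of_le_right (le_of_eq (trop_stepeq _ _ _ _ _ (trop_paireq _ _ _ _ (by rw [add_comm]; exact h))).symm)))
           | exact (le_sup_of_le_left (le_sup_of_le_right (le_of_eq (trop_stepeq _ _ _ _ _ (trop_paireq' _ _ _ _ h)).symm)))
           | exact (le_sup_of_le_left (le_sup_of_le_right (le_of_eq (trop_stepeq _ _ _ _ _ (trop_paireq' _ _ _ _ (by rw [add_comm]; exact h))).symm)))
           | exact (le_sup_of_le_left (le_sup_of_le_right (le_of_eq (trop_stepeq _ _ _ _ _ (trop_paireq'' _ _ _ _ h)).symm)))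
           | exact (le_sup_of_le_left (le_sup_of_le_right (le_of_eq (trop_stepeq _ _ _ _ _ (trop_paireq'' _ _ _ _ (by rw [add_comm]; exact h))).symm)))
           | exact (le_sup_of_le_right (le_sup_of_le_left (le_of_eq (trop_stepeq _ _ _ _ _ (trop_paireq _ _ _ _ h)).symm)))
           | exact (le_sup_of_le_right (le_sup_of_le_left (le_of_eq (trop_stepeq _ _ _ _ _ (trop_paireq _ _ _ _ (by rw [add_comm]; exact h))).symm)))
           | exact (le_sup_of_le_right (le_sup_of_le_left (le_of_eq (trop_stepeq _ _ _ _ _ (trop_paireq' _ _ _ _ h)).symm)))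
           | exact (le_sup_of_le_right (le_sup_of_le_left (le_of_eq (trop_stepeq _ _ _ _ _ (trop_paireq' _ _ _ _ (by rw [add_comm]; exact h))).symm)))
           | exact (le_sup_of_le_right (le_sup_of_le_left (le_of_eq (trop_stepeq _ _ _ _ _ (trop_paireq'' _ _ _ _ h)).symm)))
           | exact (le_sup_of_le_right (le_sup_of_le_left (le_of_eq (trop_stepeq _ _ _ _ _ (trop_paireq'' _ _ _ _ (by rw [add_comm]; exact h))).symm)))
           | exact (le_sup_of_le_right (le_sup_of_le_right (le_of_eq (trop_stepeq _ _ _ _ _ (trop_paireq _ _ _ _ h)).symm)))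
           | exact (le_sup_of_le_right (le_sup_of_le_right (le_of_eq (trop_stepeq _ _ _ _ _ (trop_paireq _ _ _ _ (by rw [add_comm]; exact h))).symm)))
           | exact (le_sup_of_le_right (le_sup_of_le_right (le_of_eq (trop_stepeq _ _ _ _ _ (trop_paireq' _ _ _ _ h)).symm)))
           | exact (le_sup_of_le_right (le_sup_of_le_right (le_of_eq (trop_stepeq _ _ _ _ _ (trop_paireq' _ _ _ _ (by rw [add_comm]; exact h))).symm)))
           | exact (le_sup_of_le_right (le_sup_of_le_right (le_of_eq (trop_stepeq _ _ _ _ _ (trop_paireq'' _ _ _ _ h)).symm)))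
           | exact (le_sup_of_le_right (le_sup_of_le_right (le_of_eq (trop_stepeq _ _ _ _ _ (trop_paireq'' _ _ _ _ (by rw [add_comm]; exact h))).symm)))
end

section
/- Let E ∈ M₂(ℝ̄) be idempotent and let H_E = {A ∈ M₂(ℝ̄) : A 𝓗 E} be its 𝓗-class, which is a group under ⊗ with identity E. Then: (i) if PC(E) = ∅ (i.e. E is the zero matrix), H_E is the trivial group; (ii) if PC(E) is a singleton, or a closed interval with exactly one endpoint in ℝ and the other in {−∞, +∞}, then H_E is isomorphic to the additive group ℝ; (iii) if PC(E) is a closed interval [x, y] with x, y ∈ ℝ and x < y, then H_E is isomorphic to ℝ × ℤ/2ℤ; (iv) if PC(E) = ℝ̂, then H_E is isomorphic to the wreath product ℝ ≀ ℤ/2ℤ, i.e. the semidirect product (ℝ × ℝ) ⋊ ℤ/2ℤ with ℤ/2ℤ acting by swapping coordinates. -/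
open scoped Classical ENNReal

noncomputable def leR (A B : Mat2) : Prop := ∃ X, A = tMul B X

noncomputable def leL (A B : Mat2) : Prop := ∃ X, A = tMul X B

noncomputable def relR (A B : Mat2) : Prop := leR A B ∧ leR B A

noncomputable def relL (A B : Mat2) : Prop := leL A B ∧ leL B A

/-- Green's relation `𝓗`. -/
noncomputable def relH (A B : Mat2) : Prop := relR A B ∧ relL A B

/-- The `𝓗`-class of a matrix. -/
noncomputable def Hclass (E : Mat2) : Set Mat2 := {A | relH A E}

/-- Multiplication of the wreath product `ℝ ≀ ℤ/2ℤ`, i.e. the semidirect product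
`(ℝ × ℝ) ⋊ ℤ/2ℤ` with `ℤ/2ℤ` acting by swapping the coordinates. -/
noncomputable def wMul (p q : (ℝ × ℝ) × ZMod 2) : (ℝ × ℝ) × ZMod 2 :=
  (p.1 + (if p.2 = 0 then q.1 else (q.1.2, q.1.1)), p.2 + q.2)

section Infra

lemma sup2 (f : Fin 2 → Rb) : Finset.univ.sup f = max (f 0) (f 1) := by
  have h : (Finset.univ : Finset (Fin 2)) = {0, 1} := by decide
  rw [h, Finset.sup_insert, Finset.sup_singleton]

lemma tMul_apply (A B : Mat2) (i j : Fin 2) :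
    tMul A B i j = max (A i 0 + B 0 j) (A i 1 + B 1 j) := by
  simp [tMul, sup2]

lemma mem_colspace {v : Fin 2 → Rb} {A : Mat2} :
    v ∈ ColSpace A ↔ ∃ c : Fin 2 → Rb, ∀ i, v i = max (c 0 + A i 0) (c 1 + A i 1) := by
  constructor
  · rintro ⟨c, hc⟩; exact ⟨c, fun i => by rw [hc i, sup2]⟩
  · rintro ⟨c, hc⟩; exact ⟨c, fun i => by rw [hc i, sup2]⟩

lemma addb_max (a b c : Rb) : a + max b c = max (a+b) (a+c) := (max_add_add_left a b c).symm
lemma maxb_add (a b c : Rb) : max b c + a = max (b+a) (c+a) := (max_add_add_right b c a).symm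

lemma coe_cancel {r : ℝ} {x y : Rb} (h : (r:Rb) + x = (r:Rb) + y) : x = y := by
  have e : ∀ z : Rb, ((-r:ℝ):Rb) + ((r:Rb) + z) = z := by
    intro z
    rw [← add_assoc, ← WithBot.coe_add, neg_add_cancel, WithBot.coe_zero, zero_add]
  rw [← e x, ← e y, h]

/-- scalar shift of a matrix -/
noncomputable def sM (t : ℝ) (A : Mat2) : Mat2 := fun i j => (t:Rb) + A i j

lemma tMul_sM_right (A B : Mat2) (t : ℝ) : tMul A (sM t B) = sM t (tMul A B) := by
  funext i j
  simp only [tMul_apply, sM, ← max_add_add_left]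
  congr 1 <;> first | rw [add_assoc] | rw [add_left_comm]

lemma tMul_sM_left (A B : Mat2) (t : ℝ) : tMul (sM t A) B = sM t (tMul A B) := by
  funext i j
  simp only [tMul_apply, sM, ← max_add_add_left]
  congr 1 <;> first | rw [add_assoc] | rw [add_left_comm]

lemma sM_sM (s t : ℝ) (A : Mat2) : sM s (sM t A) = sM (s+t) A := by
  funext i j; rw [sM, sM, sM, WithBot.coe_add, add_assoc]

lemma sM_zero (A : Mat2) : sM 0 A = A := by
  funext i j; simp [sM]

lemma sM_mem_Hclass {E : Mat2} (hE : tMul E E = E) (t : ℝ) : sM t E ∈ Hclass E := by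
  have h1 : sM t E = tMul E (sM t E) := by rw [tMul_sM_right, hE]
  have h2 : sM t E = tMul (sM t E) E := by rw [tMul_sM_left, hE]
  have h3 : E = tMul (sM t E) (sM (-t) E) := by
    rw [tMul_sM_left, tMul_sM_right, sM_sM, hE]
    simp [sM_zero]
  have h4 : E = tMul (sM (-t) E) (sM t E) := by
    rw [tMul_sM_left, tMul_sM_right, sM_sM, hE]
    rw [neg_add_cancel, sM_zero]
  exact ⟨⟨⟨_, h1⟩, ⟨_, h3⟩⟩, ⟨⟨_, h2⟩, ⟨_, h4⟩⟩⟩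

end Infra
section Classify

lemma bmaxl (x : Rb) : max (⊥:Rb) x = x := max_eq_right bot_le
lemma bmaxr (x : Rb) : max x (⊥:Rb) = x := max_eq_left bot_le

lemma bcoe_max (a b : ℝ) : max (a:Rb) (b:Rb) = ((max a b : ℝ):Rb) := rfl

lemma classify' (a b c d : Rb)
    (h00 : max (a+a) (b+c) = a) (h01 : max (a+b) (b+d) = b)
    (h10 : max (c+a) (d+c) = c) (h11 : max (c+b) (d+d) = d) :
    (a = ⊥ ∧ b = ⊥ ∧ c = ⊥ ∧ d = ⊥) ∨
    (∃ u v : Fin 2 → Rb, max (v 0 + u 0) (v 1 + u 1) = 0 ∧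
      a = u 0 + v 0 ∧ b = u 0 + v 1 ∧ c = u 1 + v 0 ∧ d = u 1 + v 1) ∨
    (∃ b' : ℝ, a = 0 ∧ b = (b':Rb) ∧ c = ⊥ ∧ d = 0) ∨
    (∃ c' : ℝ, a = 0 ∧ b = ⊥ ∧ c = (c':Rb) ∧ d = 0) ∨
    (∃ b' c' : ℝ, b' + c' < 0 ∧ a = 0 ∧ b = (b':Rb) ∧ c = (c':Rb) ∧ d = 0) ∨
    (a = 0 ∧ b = ⊥ ∧ c = ⊥ ∧ d = 0) := by
  rcases a with _ | a <;> rcases b with _ | b <;> rcases c with _ | c <;> rcases d with _ | d <;>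
    simp only [WithBot.none_eq_bot, WithBot.some_eq_coe, WithBot.bot_add, WithBot.add_bot,
      bmaxl, bmaxr, ← WithBot.coe_add, WithBot.coe_eq_coe, WithBot.coe_ne_bot,
      WithBot.bot_ne_coe, bcoe_max, max_self] at h00 h01 h10 h11
  -- (⊥,⊥,⊥,⊥)
  · exact Or.inl ⟨rfl, rfl, rfl, rfl⟩
  -- (⊥,⊥,⊥,d) : h11 : d + d = d
  · have hd : d = 0 := by linarith
    subst hd
    refine Or.inr (Or.inl ⟨![⊥, 0], ![⊥, 0], ?_, ?_, ?_, ?_, ?_⟩) <;>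
      norm_num [WithBot.add_bot, WithBot.bot_add, WithBot.none_eq_bot, WithBot.some_eq_coe]
  -- (⊥,⊥,c,d) : h10 : d + c = c
  · have hd : d = 0 := by linarith
    subst hd
    refine Or.inr (Or.inl ⟨![⊥, 0], ![(c:Rb), 0], ?_, ?_, ?_, ?_, ?_⟩) <;>
      norm_num [WithBot.add_bot, WithBot.bot_add, WithBot.none_eq_bot, WithBot.some_eq_coe]
  -- (⊥,b,⊥,d) : h01 : b + d = b
  · have hd : d = 0 := by linarith
    subst hd
    refine Or.inr (Or.inl ⟨![(b:Rb), 0], ![⊥, 0], ?_, ?_, ?_, ?_, ?_⟩) <;>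
      norm_num [WithBot.add_bot, WithBot.bot_add, WithBot.none_eq_bot, WithBot.some_eq_coe]
  -- (a,⊥,⊥,⊥) : h00 : a + a = a
  · have ha : a = 0 := by linarith
    subst ha
    refine Or.inr (Or.inl ⟨![0, ⊥], ![0, ⊥], ?_, ?_, ?_, ?_, ?_⟩) <;>
      norm_num [WithBot.add_bot, WithBot.bot_add, WithBot.none_eq_bot, WithBot.some_eq_coe]
  -- (a,⊥,⊥,d) : identity
  · have ha : a = 0 := by linarith
    have hd : d = 0 := by linarith
    subst ha; subst hd
    exact Or.inr (Or.inr (Or.inr (Or.inr (Or.inr ⟨by simp [WithBot.some_eq_coe], rfl, rfl, by simp [WithBot.some_eq_coe]⟩))))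
  -- (a,⊥,c,⊥) : h10 : c + a = c
  · have ha : a = 0 := by linarith
    subst ha
    refine Or.inr (Or.inl ⟨![0, (c:Rb)], ![0, ⊥], ?_, ?_, ?_, ?_, ?_⟩) <;>
      norm_num [WithBot.add_bot, WithBot.bot_add, WithBot.none_eq_bot, WithBot.some_eq_coe]
  -- (a,⊥,c,d) : S9
  · have ha : a = 0 := by linarith
    have hd : d = 0 := by linarith
    subst ha; subst hd
    exact Or.inr (Or.inr (Or.inr (Or.inl ⟨c, by simp [WithBot.some_eq_coe], rfl, rfl, by simp [WithBot.some_eq_coe]⟩)))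
  -- (a,b,⊥,⊥) : S3
  · have ha : a = 0 := by linarith
    subst ha
    refine Or.inr (Or.inl ⟨![0, ⊥], ![0, (b:Rb)], ?_, ?_, ?_, ?_, ?_⟩) <;>
      norm_num [WithBot.add_bot, WithBot.bot_add, WithBot.none_eq_bot, WithBot.some_eq_coe]
  -- (a,b,⊥,d) : S8
  · have ha : a = 0 := by linarith
    have hd : d = 0 := by linarith
    subst ha; subst hd
    exact Or.inr (Or.inr (Or.inl ⟨b, by simp [WithBot.some_eq_coe], rfl, rfl, by simp [WithBot.some_eq_coe]⟩))
  -- (a,b,c,d) : all real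
  · have ha0 : a ≤ 0 := by
      have := (le_max_left (a+a) (b+c)).trans_eq h00; linarith
    have hd0 : d ≤ 0 := by
      have := (le_max_right (c+b) (d+d)).trans_eq h11; linarith
    have hbca : b + c ≤ a := (le_max_right (a+a) (b+c)).trans_eq h00
    have had : a = 0 ∨ d = 0 := by
      rcases max_eq_iff.mp h01 with ⟨e1, _⟩ | ⟨e1, _⟩
      · left; linarith
      · right; linarith
    rcases lt_trichotomy (b + c) 0 with hbc | hbc | hbc
    · -- b+c<0
      have haa : a = 0 ∨ a = b + c := by
        rcases max_eq_iff.mp h00 with ⟨e1, _⟩ | ⟨e1, _⟩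
        · left; linarith
        · right; linarith
      have hdd : d = 0 ∨ d = b + c := by
        rcases max_eq_iff.mp h11 with ⟨e1, _⟩ | ⟨e1, _⟩
        · right; linarith
        · left; linarith
      rcases haa with ha | ha <;> rcases hdd with hd | hd
      · subst ha; subst hd
        exact Or.inr (Or.inr (Or.inr (Or.inr (Or.inl
          ⟨b, c, hbc, by simp [WithBot.some_eq_coe], rfl, rfl, by simp [WithBot.some_eq_coe]⟩))))
      · -- a=0, d=b+c : S12
        subst ha; subst hd
        refine Or.inr (Or.inl ⟨![0, (c:Rb)], ![0, (b:Rb)], ?_, ?_, ?_, ?_, ?_⟩)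
        · simp only [Matrix.cons_val_zero, Matrix.cons_val_one, Matrix.head_cons]
          have hle : ((b+c:ℝ):Rb) ≤ 0 := by exact_mod_cast hbc.le
          rw [add_zero, ← WithBot.coe_add, max_eq_left hle]
        all_goals simp [Matrix.cons_val_zero, Matrix.cons_val_one, Matrix.head_cons,
          WithBot.some_eq_coe, ← WithBot.coe_add, WithBot.coe_eq_coe, add_comm]
      · -- a = b+c, d = 0 : S13
        subst ha; subst hd
        refine Or.inr (Or.inl ⟨![(b:Rb), 0], ![(c:Rb), 0], ?_, ?_, ?_, ?_, ?_⟩)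
        · simp only [Matrix.cons_val_zero, Matrix.cons_val_one, Matrix.head_cons]
          have hle : ((c+b:ℝ):Rb) ≤ 0 := by exact_mod_cast (by linarith : c + b ≤ 0)
          rw [add_zero, ← WithBot.coe_add, max_eq_right hle]
        all_goals simp [Matrix.cons_val_zero, Matrix.cons_val_one, Matrix.head_cons,
          WithBot.some_eq_coe, ← WithBot.coe_add, WithBot.coe_eq_coe, add_comm]
      · exfalso
        rcases had with h | h
        · rw [h] at ha; linarith
        · rw [h] at hd; linarith
    · -- b + c = 0 : S11
      have ha : a = 0 := le_antisymm ha0 (by linarith)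
      have hd : d = 0 := le_antisymm hd0 (by
        have := (le_max_left (c+b) (d+d)).trans_eq h11; linarith)
      subst ha; subst hd
      refine Or.inr (Or.inl ⟨![0, (c:Rb)], ![0, (b:Rb)], ?_, ?_, ?_, ?_, ?_⟩)
      · simp only [Matrix.cons_val_zero, Matrix.cons_val_one, Matrix.head_cons]
        have hle : ((b+c:ℝ):Rb) ≤ 0 := by exact_mod_cast (le_of_eq hbc)
        rw [add_zero, ← WithBot.coe_add, max_eq_left hle]
      all_goals simp [Matrix.cons_val_zero, Matrix.cons_val_one, Matrix.head_cons,
        WithBot.some_eq_coe, ← WithBot.coe_add, WithBot.coe_eq_coe, add_comm]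
      all_goals linarith
    · exfalso; linarith

end Classify
section PCFacts

lemma classify (E : Mat2) (hE : tMul E E = E) :
    (∀ i j, E i j = ⊥) ∨
    (∃ u v : Fin 2 → Rb, max (v 0 + u 0) (v 1 + u 1) = 0 ∧ ∀ i j, E i j = u i + v j) ∨
    (∃ b : ℝ, E 0 0 = 0 ∧ E 0 1 = (b:Rb) ∧ E 1 0 = ⊥ ∧ E 1 1 = 0) ∨
    (∃ c : ℝ, E 0 0 = 0 ∧ E 0 1 = ⊥ ∧ E 1 0 = (c:Rb) ∧ E 1 1 = 0) ∨
    (∃ b c : ℝ, b + c < 0 ∧ E 0 0 = 0 ∧ E 0 1 = (b:Rb) ∧ E 1 0 = (c:Rb) ∧ E 1 1 = 0) ∨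
    (E 0 0 = 0 ∧ E 0 1 = ⊥ ∧ E 1 0 = ⊥ ∧ E 1 1 = 0) := by
  have h00 := congrFun (congrFun hE 0) 0
  have h01 := congrFun (congrFun hE 0) 1
  have h10 := congrFun (congrFun hE 1) 0
  have h11 := congrFun (congrFun hE 1) 1
  rw [tMul_apply] at h00 h01 h10 h11
  rcases classify' _ _ _ _ h00 h01 h10 h11 with h | ⟨u, v, huv, h1, h2, h3, h4⟩ | h | h | h | h
  · refine Or.inl ?_
    intro i j; fin_cases i <;> fin_cases j <;>
      [exact h.1; exact h.2.1; exact h.2.2.1; exact h.2.2.2]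
  · refine Or.inr (Or.inl ⟨u, v, huv, ?_⟩)
    intro i j; fin_cases i <;> fin_cases j <;> [exact h1; exact h2; exact h3; exact h4]
  · exact Or.inr (Or.inr (Or.inl h))
  · exact Or.inr (Or.inr (Or.inr (Or.inl h)))
  · exact Or.inr (Or.inr (Or.inr (Or.inr (Or.inl h))))
  · exact Or.inr (Or.inr (Or.inr (Or.inr (Or.inr h))))

lemma toE_bot : toE ⊥ = ⊥ := rfl
lemma toE_coe (r : ℝ) : toE (r:Rb) = (r:EReal) := rfl
lemma toE_zero : toE (0:Rb) = 0 := rfl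

lemma toE_none : toE none = ⊥ := rfl
lemma toE_some (r : ℝ) : toE (some r) = (r:EReal) := rfl

lemma toE_ne_top (x : Rb) : toE x ≠ ⊤ := by
  cases x with
  | none => exact bot_ne_top
  | some r => exact fun h => EReal.coe_ne_top r h

lemma projPt_bot_iff (v : Fin 2 → Rb) : projPt v = ⊥ ↔ v 1 = ⊥ := by
  constructor
  · intro h
    by_contra hne
    obtain ⟨r, hr⟩ := WithBot.ne_bot_iff_exists.mp hne
    rw [projPt, ← hr, toE_coe] at h
    cases h0 : v 0 with
    | none =>
      rw [h0, toE_none, EReal.sub_bot (by exact EReal.coe_ne_bot r)] at h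
      exact top_ne_bot h
    | some s =>
      rw [h0, toE_some, ← EReal.coe_sub] at h
      exact EReal.coe_ne_bot _ h
  · intro h
    rw [projPt, h, toE_bot]
    exact EReal.bot_sub _

lemma projPt_top_iff (v : Fin 2 → Rb) : projPt v = ⊤ ↔ (v 0 = ⊥ ∧ v 1 ≠ ⊥) := by
  constructor
  · intro h
    cases h0 : v 0 with
    | none =>
      refine ⟨rfl, ?_⟩
      intro h1
      rw [projPt, h0, h1, toE_bot, EReal.bot_sub] at h
      exact bot_ne_top h
    | some s =>
      exfalso
      cases h1 : v 1 with
      | none => rw [projPt, h1, toE_none, EReal.bot_sub] at h; exact bot_ne_top h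
      | some r =>
        rw [projPt, h0, h1, toE_some, toE_some, ← EReal.coe_sub] at h
        exact EReal.coe_ne_top _ h
  · rintro ⟨h0, h1⟩
    obtain ⟨r, hr⟩ := WithBot.ne_bot_iff_exists.mp h1
    rw [projPt, h0, ← hr, toE_coe, toE_bot]
    exact EReal.sub_bot (EReal.coe_ne_bot r)

lemma ne_zeroVec_iff (v : Fin 2 → Rb) : v ≠ zeroVec ↔ (v 0 ≠ ⊥ ∨ v 1 ≠ ⊥) := by
  rw [← not_and_or]
  constructor
  · intro h hc
    exact h (funext fun i => by fin_cases i <;> simp [zeroVec, hc.1, hc.2])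
  · intro h hc
    exact h ⟨by rw [hc]; rfl, by rw [hc]; rfl⟩

lemma col_mem (A : Mat2) (j : Fin 2) : (fun i => A i j) ∈ ColSpace A := by
  rw [mem_colspace]
  fin_cases j
  · exact ⟨![0, ⊥], fun i => by simp [bmaxr]⟩
  · exact ⟨![⊥, 0], fun i => by simp [bmaxl]⟩

lemma pc_zero (E : Mat2) (h : ∀ i j, E i j = ⊥) : PC E = ∅ := by
  ext z
  simp only [PC, Set.mem_setOf_eq, Set.mem_empty_iff_false, iff_false]
  rintro ⟨v, hv, hne, -⟩
  rw [mem_colspace] at hv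
  obtain ⟨c, hc⟩ := hv
  refine hne (funext fun i => ?_)
  rw [hc i, h i 0, h i 1, WithBot.add_bot, WithBot.add_bot, bmaxl]
  rfl

lemma pc_nonempty (E : Mat2) (i j : Fin 2) (h : E i j ≠ ⊥) : (PC E).Nonempty := by
  refine ⟨projPt (fun k => E k j), ⟨fun k => E k j, col_mem E j,
    (ne_zeroVec_iff _).mpr ?_, rfl⟩⟩
  fin_cases i
  · exact Or.inl h
  · exact Or.inr h

lemma pc_bot_mem (E : Mat2) (hA : E 0 0 = 0) (hC : E 1 0 = ⊥) : ⊥ ∈ PC E := by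
  refine ⟨fun k => E k 0, col_mem E 0, (ne_zeroVec_iff _).mpr (Or.inl (by rw [hA]; simp)), ?_⟩
  rw [projPt_bot_iff]; exact hC

lemma pc_top_mem (E : Mat2) (hB : E 0 1 = ⊥) (hD : E 1 1 = 0) : ⊤ ∈ PC E := by
  refine ⟨fun k => E k 1, col_mem E 1, (ne_zeroVec_iff _).mpr (Or.inr (by rw [hD]; simp)), ?_⟩
  rw [projPt_top_iff]
  exact ⟨hB, by rw [hD]; simp⟩

lemma pc_coe_mem_c (E : Mat2) (c : ℝ) (hA : E 0 0 = 0) (hC : E 1 0 = (c:Rb)) :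
    (c:EReal) ∈ PC E := by
  refine ⟨fun k => E k 0, col_mem E 0, (ne_zeroVec_iff _).mpr (Or.inl (by rw [hA]; simp)), ?_⟩
  rw [projPt, hA, hC, toE_coe, toE_zero]
  simp

lemma pc_coe_mem_b (E : Mat2) (b : ℝ) (hB : E 0 1 = (b:Rb)) (hD : E 1 1 = 0) :
    ((-b : ℝ):EReal) ∈ PC E := by
  refine ⟨fun k => E k 1, col_mem E 1, (ne_zeroVec_iff _).mpr (Or.inr (by rw [hD]; simp)), ?_⟩
  rw [projPt, hB, hD, toE_coe, toE_zero]
  rw [show (0:EReal) = ((0:ℝ):EReal) from rfl, ← EReal.coe_sub]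
  norm_num

lemma pc_bot_not_mem (E : Mat2) (hC : E 1 0 ≠ ⊥) (hD : E 1 1 ≠ ⊥) : ⊥ ∉ PC E := by
  rintro ⟨v, hv, hne, hproj⟩
  rw [projPt_bot_iff] at hproj
  rw [mem_colspace] at hv
  obtain ⟨c, hc⟩ := hv
  have h1 := hc 1
  rw [hproj] at h1
  have h1' := max_eq_bot.mp h1.symm
  have hc0 : c 0 = ⊥ := by
    rcases WithBot.add_eq_bot.mp h1'.1 with h | h
    · exact h
    · exact absurd h hC
  have hc1 : c 1 = ⊥ := by
    rcases WithBot.add_eq_bot.mp h1'.2 with h | h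
    · exact h
    · exact absurd h hD
  have h0 := hc 0
  rw [hc0, hc1, WithBot.bot_add, WithBot.bot_add, bmaxl] at h0
  rcases (ne_zeroVec_iff v).mp hne with h | h
  · exact h h0
  · exact h hproj

lemma pc_top_not_mem (E : Mat2) (hA : E 0 0 ≠ ⊥) (hB : E 0 1 ≠ ⊥) : ⊤ ∉ PC E := by
  rintro ⟨v, hv, hne, hproj⟩
  rw [projPt_top_iff] at hproj
  rw [mem_colspace] at hv
  obtain ⟨c, hc⟩ := hv
  have h0 := hc 0
  rw [hproj.1] at h0
  have h0' := max_eq_bot.mp h0.symm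
  have hc0 : c 0 = ⊥ := by
    rcases WithBot.add_eq_bot.mp h0'.1 with h | h
    · exact h
    · exact absurd h hA
  have hc1 : c 1 = ⊥ := by
    rcases WithBot.add_eq_bot.mp h0'.2 with h | h
    · exact h
    · exact absurd h hB
  have h1 := hc 1
  rw [hc0, hc1, WithBot.bot_add, WithBot.bot_add, bmaxl] at h1
  exact hproj.2 h1

lemma projPt_shift (t : ℝ) (u : Fin 2 → Rb) : projPt (fun i => (t:Rb) + u i) = projPt u := by
  rw [projPt, projPt]
  cases h0 : u 0 <;> cases h1 : u 1 <;>
    simp only [WithBot.none_eq_bot, WithBot.some_eq_coe, WithBot.add_bot, ← WithBot.coe_add,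
      toE_bot, toE_coe]
  · rw [EReal.sub_bot (EReal.coe_ne_bot _), EReal.sub_bot (EReal.coe_ne_bot _)]
  · rw [EReal.bot_sub, EReal.bot_sub]
  · rw [← EReal.coe_sub, ← EReal.coe_sub, EReal.coe_eq_coe_iff]; ring

lemma pc_rank1 (E : Mat2) (u v : Fin 2 → Rb)
    (hEuv : ∀ i j, E i j = u i + v j) :
    ∀ z ∈ PC E, z = projPt u := by
  rintro z ⟨w, hw, hne, rfl⟩
  rw [mem_colspace] at hw
  obtain ⟨c, hc⟩ := hw
  have hw' : ∀ i, w i = max (c 0 + v 0) (c 1 + v 1) + u i := by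
    intro i
    rw [hc i, hEuv i 0, hEuv i 1, maxb_add]
    congr 1 <;> rw [add_comm (u i), add_assoc]
  rcases hT : max (c 0 + v 0) (c 1 + v 1) with _ | T
  · exfalso
    rcases (ne_zeroVec_iff w).mp hne with h | h
    · exact h (by rw [hw' 0, hT, WithBot.none_eq_bot, WithBot.bot_add])
    · exact h (by rw [hw' 1, hT, WithBot.none_eq_bot, WithBot.bot_add])
  · have : w = fun i => (T:Rb) + u i := funext fun i => by
      rw [hw' i, hT, WithBot.some_eq_coe]
    rw [this, projPt_shift]

end PCFacts
section HRank1

lemma entry_eq (A B X : Mat2) (h : A = tMul B X) (i j : Fin 2) :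
    A i j = max (B i 0 + X 0 j) (B i 1 + X 1 j) := by
  rw [h, tMul_apply]

lemma Hclass_rank1 (E : Mat2) (u v : Fin 2 → Rb)
    (huv : max (v 0 + u 0) (v 1 + u 1) = 0)
    (hEuv : ∀ i j, E i j = u i + v j) (hE : tMul E E = E) :
    Hclass E = {A | ∃ t : ℝ, A = sM t E} := by
  ext A
  simp only [Set.mem_setOf_eq]
  constructor
  · rintro ⟨⟨⟨X, hX⟩, ⟨Z, hZ⟩⟩, ⟨⟨Y, hY⟩, -⟩⟩
    obtain ⟨k, hk⟩ : ∃ k : Fin 2, v k + u k = 0 := by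
      rcases max_eq_iff.mp huv with ⟨h, -⟩ | ⟨h, -⟩
      exacts [⟨0, h⟩, ⟨1, h⟩]
    have hukb : u k ≠ ⊥ := fun h => by
      rw [h, WithBot.add_bot] at hk; exact absurd hk (by simp)
    obtain ⟨uk, huk⟩ := WithBot.ne_bot_iff_exists.mp hukb
    set w : Fin 2 → Rb := fun j => max (v 0 + X 0 j) (v 1 + X 1 j) with hw
    set z : Fin 2 → Rb := fun i => max (Y i 0 + u 0) (Y i 1 + u 1) with hz
    have hAw : ∀ i j, A i j = u i + w j := by
      intro i j
      calc A i j = max (E i 0 + X 0 j) (E i 1 + X 1 j) := entry_eq _ _ _ hX i j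
        _ = max (u i + (v 0 + X 0 j)) (u i + (v 1 + X 1 j)) := by
            rw [hEuv i 0, hEuv i 1, add_assoc, add_assoc]
        _ = u i + w j := (addb_max _ _ _).symm
    have hAz : ∀ i j, A i j = z i + v j := by
      intro i j
      calc A i j = max (Y i 0 + E 0 j) (Y i 1 + E 1 j) := entry_eq _ _ _ hY i j
        _ = max (Y i 0 + u 0 + v j) (Y i 1 + u 1 + v j) := by
            rw [hEuv 0 j, hEuv 1 j, ← add_assoc, ← add_assoc]
        _ = z i + v j := (maxb_add _ _ _).symm
    have hEkk : E k k = 0 := by rw [hEuv k k, add_comm]; exact hk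
    have hmx : max (A k 0 + Z 0 k) (A k 1 + Z 1 k) = 0 := by
      rw [← tMul_apply, ← hZ]; exact hEkk
    obtain ⟨j0, hj0⟩ : ∃ j0 : Fin 2, A k j0 ≠ ⊥ := by
      rcases max_eq_iff.mp hmx with ⟨h, -⟩ | ⟨h, -⟩
      · exact ⟨0, fun hb => by rw [hb, WithBot.bot_add] at h; exact absurd h (by simp)⟩
      · exact ⟨1, fun hb => by rw [hb, WithBot.bot_add] at h; exact absurd h (by simp)⟩
    have hzk : z k ≠ ⊥ := by
      intro hb; apply hj0; rw [hAz k j0, hb, WithBot.bot_add]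
    obtain ⟨zk, hzk'⟩ := WithBot.ne_bot_iff_exists.mp hzk
    refine ⟨zk - uk, ?_⟩
    have hwj : ∀ j, w j = ((zk - uk : ℝ):Rb) + v j := by
      intro j
      apply coe_cancel (r := uk)
      calc ((uk:ℝ):Rb) + w j = u k + w j := by rw [huk]
        _ = A k j := (hAw k j).symm
        _ = z k + v j := hAz k j
        _ = ((zk:ℝ):Rb) + v j := by rw [hzk']
        _ = ((uk:ℝ):Rb) + (((zk - uk : ℝ):Rb) + v j) := by
            rw [← add_assoc, ← WithBot.coe_add]
            norm_num
    funext i j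
    show A i j = ((zk - uk : ℝ):Rb) + E i j
    rw [hAw i j, hwj j, hEuv i j, add_left_comm]
  · rintro ⟨t, rfl⟩; exact sM_mem_Hclass hE t

lemma shifts_conc (E : Mat2) (hE : tMul E E = E) (k : Fin 2) (hk : E k k = 0)
    (hH : Hclass E = {A | ∃ t : ℝ, A = sM t E}) :
    ∃ f : Mat2 → ℝ, Set.BijOn f (Hclass E) Set.univ ∧
      ∀ A ∈ Hclass E, ∀ B ∈ Hclass E, f (tMul A B) = f A + f B := by
  have feval : ∀ t : ℝ, (sM t E k k).unbotD 0 = t := by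
    intro t
    rw [sM, hk, add_zero]
    rfl
  refine ⟨fun A => (A k k).unbotD 0, ⟨fun A _ => trivial, ?_, ?_⟩, ?_⟩
  · intro A hA B hB hfAB
    rw [hH] at hA hB
    obtain ⟨t, rfl⟩ := hA
    obtain ⟨s, rfl⟩ := hB
    simp only [feval] at hfAB
    rw [hfAB]
  · intro x _
    refine ⟨sM x E, ?_, feval x⟩
    rw [hH]; exact ⟨x, rfl⟩
  · intro A hA B hB
    rw [hH] at hA hB
    obtain ⟨t, rfl⟩ := hA
    obtain ⟨s, rfl⟩ := hB
    have : tMul (sM t E) (sM s E) = sM (t+s) E := by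
      rw [tMul_sM_left, tMul_sM_right, sM_sM, hE]
    simp only [this, feval]

end HRank1
section HS8

lemma addb_eq_zero (x y : Rb) (h : x + y = 0) :
    ∃ a bb : ℝ, x = ↑a ∧ y = ↑bb ∧ a + bb = 0 := by
  have h' : x + y = ((0:ℝ):Rb) := by exact_mod_cast h
  obtain ⟨a, bb, h1, h2, h3⟩ := WithBot.add_eq_coe.mp h'
  exact ⟨a, bb, h1.symm, h2.symm, h3⟩

lemma Hclass_S8 (E : Mat2) (b : ℝ) (hA : E 0 0 = 0) (hB : E 0 1 = (b:Rb))
    (hC : E 1 0 = ⊥) (hD : E 1 1 = 0) (hE : tMul E E = E) :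
    Hclass E = {A | ∃ t : ℝ, A = sM t E} := by
  ext A
  simp only [Set.mem_setOf_eq]
  constructor
  · rintro ⟨⟨⟨X, hX⟩, ⟨Z, hZ⟩⟩, ⟨⟨Y, hY⟩, ⟨W, hW⟩⟩⟩
    have eA : ∀ i j, A i j = max (E i 0 + X 0 j) (E i 1 + X 1 j) := entry_eq _ _ _ hX
    have eY : ∀ i j, A i j = max (Y i 0 + E 0 j) (Y i 1 + E 1 j) := entry_eq _ _ _ hY
    have eZ : ∀ i j, E i j = max (A i 0 + Z 0 j) (A i 1 + Z 1 j) := entry_eq _ _ _ hZ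
    have eW : ∀ i j, E i j = max (W i 0 + A 0 j) (W i 1 + A 1 j) := entry_eq _ _ _ hW
    have ineq1 : ∀ j, (b:Rb) + A 1 j ≤ A 0 j := by
      intro j
      have h1 : A 1 j = X 1 j := by
        rw [eA 1 j, hC, hD, WithBot.bot_add, bmaxl, zero_add]
      rw [eA 0 j, hA, hB, zero_add, h1]
      exact le_max_right _ _
    have ineq2 : ∀ i, A i 0 + (b:Rb) ≤ A i 1 := by
      intro i
      have h1 : A i 0 = Y i 0 := by
        rw [eY i 0, hA, hC, WithBot.add_bot, bmaxr, add_zero]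
      rw [eY i 1, hB, hD, add_zero, h1, add_comm]
      exact le_max_left _ _
    have hA10 : A 1 0 = ⊥ := by
      by_contra hne
      have f10 : max (W 1 0 + A 0 0) (W 1 1 + A 1 0) = ⊥ := by rw [← eW 1 0, hC]
      have f10' := max_eq_bot.mp f10
      have hW11 : W 1 1 = ⊥ := (WithBot.add_eq_bot.mp f10'.2).resolve_right hne
      have f11 : max (W 1 0 + A 0 1) (W 1 1 + A 1 1) = 0 := by rw [← eW 1 1, hD]
      have hval : W 1 0 + A 0 1 = 0 := by
        rcases max_eq_iff.mp f11 with ⟨h, -⟩ | ⟨h, -⟩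
        · exact h
        · rw [hW11, WithBot.bot_add] at h; exact absurd h (by simp)
      have hW10 : W 1 0 ≠ ⊥ := fun hbb => by
        rw [hbb, WithBot.bot_add] at hval; exact absurd hval (by simp)
      have hA00 : A 0 0 = ⊥ := (WithBot.add_eq_bot.mp f10'.1).resolve_left hW10
      have h2 := ineq1 0
      rw [hA00, le_bot_iff, WithBot.add_eq_bot] at h2
      rcases h2 with h | h
      · exact absurd h (by simp)
      · exact hne h
    have e11 : max (A 1 0 + Z 0 1) (A 1 1 + Z 1 1) = 0 := by rw [← eZ 1 1, hD]
    have hA11Z : A 1 1 + Z 1 1 = 0 := by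
      rcases max_eq_iff.mp e11 with ⟨h, -⟩ | ⟨h, -⟩
      · rw [hA10, WithBot.bot_add] at h; exact absurd h (by simp)
      · exact h
    obtain ⟨t', z', hA11, hZ11, htz⟩ := addb_eq_zero _ _ hA11Z
    have e10 : max (A 1 0 + Z 0 0) (A 1 1 + Z 1 0) = ⊥ := by rw [← eZ 1 0, hC]
    have hZ10 : Z 1 0 = ⊥ := by
      rcases WithBot.add_eq_bot.mp (max_eq_bot.mp e10).2 with h | h
      · rw [hA11] at h; exact absurd h (by simp)
      · exact h
    have e00 : max (A 0 0 + Z 0 0) (A 0 1 + Z 1 0) = 0 := by rw [← eZ 0 0, hA]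
    have hA00Z : A 0 0 + Z 0 0 = 0 := by
      rcases max_eq_iff.mp e00 with ⟨h, -⟩ | ⟨h, -⟩
      · exact h
      · rw [hZ10, WithBot.add_bot] at h; exact absurd h (by simp)
    obtain ⟨t, z0, hA00, hZ00, htz0⟩ := addb_eq_zero _ _ hA00Z
    have f00 : max (W 0 0 + A 0 0) (W 0 1 + A 1 0) = 0 := by rw [← eW 0 0, hA]
    have hW00A : W 0 0 + A 0 0 = 0 := by
      rcases max_eq_iff.mp f00 with ⟨h, -⟩ | ⟨h, -⟩
      · exact h
      · rw [hA10, WithBot.add_bot] at h; exact absurd h (by simp)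
    obtain ⟨w0, t2, hW00, hA00', hwt⟩ := addb_eq_zero _ _ hW00A
    have ht2 : t2 = t := by
      have := hA00'.symm.trans hA00
      exact_mod_cast this
    have f01 : max (W 0 0 + A 0 1) (W 0 1 + A 1 1) = (b:Rb) := by rw [← eW 0 1, hB]
    have hle : W 0 0 + A 0 1 ≤ (b:Rb) := (le_max_left _ _).trans_eq f01
    have hA01ge : ((t + b : ℝ):Rb) ≤ A 0 1 := by
      have h2 := ineq2 0
      rw [hA00] at h2
      rw [WithBot.coe_add]
      exact h2
    have hA01ne : A 0 1 ≠ ⊥ := by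
      intro hb
      rw [hb, le_bot_iff] at hA01ge
      exact absurd hA01ge (by simp)
    obtain ⟨q, hA01⟩ := WithBot.ne_bot_iff_exists.mp hA01ne
    have hqle : w0 + q ≤ b := by
      rw [hW00, ← hA01, ← WithBot.coe_add] at hle
      exact_mod_cast hle
    have hq : q = t + b := by
      have h1 : t + b ≤ q := by
        rw [← hA01] at hA01ge
        exact_mod_cast hA01ge
      have h2 : q ≤ t + b := by linarith
      linarith
    have e01 : max (A 0 0 + Z 0 1) (A 0 1 + Z 1 1) = (b:Rb) := by rw [← eZ 0 1, hB]
    have hq2 : q + z' ≤ b := by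
      have hle2 : A 0 1 + Z 1 1 ≤ (b:Rb) := (le_max_right _ _).trans_eq e01
      rw [← hA01, hZ11, ← WithBot.coe_add] at hle2
      exact_mod_cast hle2
    have ht' : t' = t := by
      have h1 : t' ≤ t := by
        have h2 := ineq1 1
        rw [hA11, ← hA01, ← WithBot.coe_add] at h2
        have : b + t' ≤ q := by exact_mod_cast h2
        linarith
      have h2 : t ≤ t' := by linarith
      linarith
    refine ⟨t, ?_⟩
    funext i j
    fin_cases i <;> fin_cases j
    · show A 0 0 = (t:Rb) + E 0 0
      rw [hA00, hA, add_zero]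
    · show A 0 1 = (t:Rb) + E 0 1
      rw [← hA01, hB, hq, ← WithBot.coe_add]
    · show A 1 0 = (t:Rb) + E 1 0
      rw [hA10, hC, WithBot.add_bot]
    · show A 1 1 = (t:Rb) + E 1 1
      rw [hA11, hD, add_zero, ht']
  · rintro ⟨t, rfl⟩; exact sM_mem_Hclass hE t

noncomputable def tT (A : Mat2) : Mat2 := fun i j => A j i

lemma tT_tMul (A B : Mat2) : tT (tMul A B) = tMul (tT B) (tT A) := by
  funext i j
  show tMul A B j i = tMul (tT B) (tT A) i j
  simp only [tMul_apply]
  congr 1 <;> rw [add_comm] <;> rfl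

lemma tT_tT (A : Mat2) : tT (tT A) = A := rfl

lemma sM_tT (t : ℝ) (A : Mat2) : tT (sM t A) = sM t (tT A) := rfl

lemma mem_Hclass_tT {A E : Mat2} (h : A ∈ Hclass E) : tT A ∈ Hclass (tT E) := by
  obtain ⟨⟨⟨X, hX⟩, ⟨Z, hZ⟩⟩, ⟨⟨Y, hY⟩, ⟨W, hW⟩⟩⟩ := h
  refine ⟨⟨⟨tT Y, ?_⟩, ⟨tT W, ?_⟩⟩, ⟨⟨tT X, ?_⟩, ⟨tT Z, ?_⟩⟩⟩
  · rw [hY, tT_tMul]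
  · rw [hW, tT_tMul]
  · rw [hX, tT_tMul]
  · rw [hZ, tT_tMul]

lemma Hclass_S9 (E : Mat2) (c : ℝ) (hA : E 0 0 = 0) (hB : E 0 1 = ⊥)
    (hC : E 1 0 = (c:Rb)) (hD : E 1 1 = 0) (hE : tMul E E = E) :
    Hclass E = {A | ∃ t : ℝ, A = sM t E} := by
  ext A
  simp only [Set.mem_setOf_eq]
  constructor
  · intro h
    have h' := mem_Hclass_tT h
    have hTE : tMul (tT E) (tT E) = tT E := by rw [← tT_tMul, hE]
    have hcls := Hclass_S8 (tT E) c hA hC hB hD hTE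
    rw [hcls] at h'
    obtain ⟨t, ht⟩ := h'
    refine ⟨t, ?_⟩
    have h2 := congrArg tT ht
    rwa [tT_tT, sM_tT, tT_tT] at h2
  · rintro ⟨t, rfl⟩; exact sM_mem_Hclass hE t

end HS8
section HS7

lemma mat_ext {A B : Mat2} (h00 : A 0 0 = B 0 0) (h01 : A 0 1 = B 0 1)
    (h10 : A 1 0 = B 1 0) (h11 : A 1 1 = B 1 1) : A = B := by
  funext i j
  fin_cases i <;> fin_cases j
  · exact h00
  · exact h01
  · exact h10
  · exact h11

noncomputable def Dg (l m : ℝ) : Mat2 := ![![(l:Rb), ⊥], ![⊥, (m:Rb)]]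
noncomputable def Ag (l m : ℝ) : Mat2 := ![![⊥, (l:Rb)], ![(m:Rb), ⊥]]

lemma Dg00 (l m : ℝ) : Dg l m 0 0 = (l:Rb) := rfl
lemma Dg01 (l m : ℝ) : Dg l m 0 1 = ⊥ := rfl
lemma Dg10 (l m : ℝ) : Dg l m 1 0 = ⊥ := rfl
lemma Dg11 (l m : ℝ) : Dg l m 1 1 = (m:Rb) := rfl
lemma Ag00 (l m : ℝ) : Ag l m 0 0 = ⊥ := rfl
lemma Ag01 (l m : ℝ) : Ag l m 0 1 = (l:Rb) := rfl
lemma Ag10 (l m : ℝ) : Ag l m 1 0 = (m:Rb) := rfl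
lemma Ag11 (l m : ℝ) : Ag l m 1 1 = ⊥ := rfl

variable {E : Mat2}

lemma id_left (hA : E 0 0 = 0) (hB : E 0 1 = ⊥) (hC : E 1 0 = ⊥) (hD : E 1 1 = 0)
    (X : Mat2) : tMul E X = X := by
  funext i j
  fin_cases i <;> rw [tMul_apply]
  · show max (E 0 0 + X 0 j) (E 0 1 + X 1 j) = X 0 j
    rw [hA, hB, zero_add, WithBot.bot_add, bmaxr]
  · show max (E 1 0 + X 0 j) (E 1 1 + X 1 j) = X 1 j
    rw [hC, hD, zero_add, WithBot.bot_add, bmaxl]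

lemma id_right (hA : E 0 0 = 0) (hB : E 0 1 = ⊥) (hC : E 1 0 = ⊥) (hD : E 1 1 = 0)
    (X : Mat2) : tMul X E = X := by
  funext i j
  fin_cases j <;> rw [tMul_apply]
  · show max (X i 0 + E 0 0) (X i 1 + E 1 0) = X i 0
    rw [hA, hC, add_zero, WithBot.add_bot, bmaxr]
  · show max (X i 0 + E 0 1) (X i 1 + E 1 1) = X i 1
    rw [hB, hD, add_zero, WithBot.add_bot, bmaxl]

lemma DgDg (l m l' m' : ℝ) : tMul (Dg l m) (Dg l' m') = Dg (l+l') (m+m') := by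
  refine mat_ext ?_ ?_ ?_ ?_ <;> rw [tMul_apply] <;>
    simp only [Dg00, Dg01, Dg10, Dg11, Ag00, Ag01, Ag10, Ag11] <;>
    simp [WithBot.add_bot, WithBot.bot_add, bmaxl, bmaxr, ← WithBot.coe_add]

lemma DgAg (l m l' m' : ℝ) : tMul (Dg l m) (Ag l' m') = Ag (l+l') (m+m') := by
  refine mat_ext ?_ ?_ ?_ ?_ <;> rw [tMul_apply] <;>
    simp only [Dg00, Dg01, Dg10, Dg11, Ag00, Ag01, Ag10, Ag11] <;>
    simp [WithBot.add_bot, WithBot.bot_add, bmaxl, bmaxr, ← WithBot.coe_add]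

lemma AgDg (l m l' m' : ℝ) : tMul (Ag l m) (Dg l' m') = Ag (l+m') (m+l') := by
  refine mat_ext ?_ ?_ ?_ ?_ <;> rw [tMul_apply] <;>
    simp only [Dg00, Dg01, Dg10, Dg11, Ag00, Ag01, Ag10, Ag11] <;>
    simp [WithBot.add_bot, WithBot.bot_add, bmaxl, bmaxr, ← WithBot.coe_add]

lemma AgAg (l m l' m' : ℝ) : tMul (Ag l m) (Ag l' m') = Dg (l+m') (m+l') := by
  refine mat_ext ?_ ?_ ?_ ?_ <;> rw [tMul_apply] <;>
    simp only [Dg00, Dg01, Dg10, Dg11, Ag00, Ag01, Ag10, Ag11] <;>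
    simp [WithBot.add_bot, WithBot.bot_add, bmaxl, bmaxr, ← WithBot.coe_add]

lemma E_eq_Dg00 (hA : E 0 0 = 0) (hB : E 0 1 = ⊥) (hC : E 1 0 = ⊥) (hD : E 1 1 = 0) :
    E = Dg 0 0 := by
  funext i j
  fin_cases i <;> fin_cases j
  · show E 0 0 = Dg 0 0 0 0
    rw [hA, Dg00]; norm_num
  · show E 0 1 = Dg 0 0 0 1
    rw [hB, Dg01]
  · show E 1 0 = Dg 0 0 1 0
    rw [hC, Dg10]
  · show E 1 1 = Dg 0 0 1 1
    rw [hD, Dg11]; norm_num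

lemma Hclass_S7 (hA : E 0 0 = 0) (hB : E 0 1 = ⊥) (hC : E 1 0 = ⊥) (hD : E 1 1 = 0) :
    Hclass E = {A | (∃ l m : ℝ, A = Dg l m) ∨ (∃ l m : ℝ, A = Ag l m)} := by
  ext A
  simp only [Set.mem_setOf_eq]
  constructor
  · rintro ⟨⟨-, ⟨Z, hZ⟩⟩, -⟩
    have eZ : ∀ i j, E i j = max (A i 0 + Z 0 j) (A i 1 + Z 1 j) := entry_eq _ _ _ hZ
    have z00 : max (A 0 0 + Z 0 0) (A 0 1 + Z 1 0) = 0 := by rw [← eZ 0 0, hA]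
    have z01 : max (A 0 0 + Z 0 1) (A 0 1 + Z 1 1) = ⊥ := by rw [← eZ 0 1, hB]
    have z10 : max (A 1 0 + Z 0 0) (A 1 1 + Z 1 0) = ⊥ := by rw [← eZ 1 0, hC]
    have z11 : max (A 1 0 + Z 0 1) (A 1 1 + Z 1 1) = 0 := by rw [← eZ 1 1, hD]
    rcases max_eq_iff.mp z00 with ⟨h00, -⟩ | ⟨h00, -⟩
    · -- A 0 0 real, diagonal
      left
      obtain ⟨l, zz, hl, hzz, -⟩ := addb_eq_zero _ _ h00
      have hZ00 : Z 0 0 ≠ ⊥ := by rw [hzz]; simp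
      have hA10 : A 1 0 = ⊥ :=
        (WithBot.add_eq_bot.mp (max_eq_bot.mp z10).1).resolve_right hZ00
      have h11 : A 1 1 + Z 1 1 = 0 := by
        rcases max_eq_iff.mp z11 with ⟨h, -⟩ | ⟨h, -⟩
        · rw [hA10, WithBot.bot_add] at h; exact absurd h (by simp)
        · exact h
      obtain ⟨m, z2, hm, hz2, -⟩ := addb_eq_zero _ _ h11
      have hZ11 : Z 1 1 ≠ ⊥ := by rw [hz2]; simp
      have hA01 : A 0 1 = ⊥ :=
        (WithBot.add_eq_bot.mp (max_eq_bot.mp z01).2).resolve_right hZ11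
      refine ⟨l, m, ?_⟩
      funext i j
      fin_cases i <;> fin_cases j
      · show A 0 0 = Dg l m 0 0
        rw [hl]; rfl
      · show A 0 1 = Dg l m 0 1
        rw [hA01]; rfl
      · show A 1 0 = Dg l m 1 0
        rw [hA10]; rfl
      · show A 1 1 = Dg l m 1 1
        rw [hm]; rfl
    · -- A 0 1 real, antidiagonal
      right
      obtain ⟨l, zz, hl, hzz, -⟩ := addb_eq_zero _ _ h00
      have hZ10 : Z 1 0 ≠ ⊥ := by rw [hzz]; simp
      have hA11 : A 1 1 = ⊥ :=
        (WithBot.add_eq_bot.mp (max_eq_bot.mp z10).2).resolve_right hZ10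
      have h11 : A 1 0 + Z 0 1 = 0 := by
        rcases max_eq_iff.mp z11 with ⟨h, -⟩ | ⟨h, -⟩
        · exact h
        · rw [hA11, WithBot.bot_add] at h; exact absurd h (by simp)
      obtain ⟨m, z2, hm, hz2, -⟩ := addb_eq_zero _ _ h11
      have hZ01 : Z 0 1 ≠ ⊥ := by rw [hz2]; simp
      have hA00 : A 0 0 = ⊥ :=
        (WithBot.add_eq_bot.mp (max_eq_bot.mp z01).1).resolve_right hZ01
      refine ⟨l, m, ?_⟩
      funext i j
      fin_cases i <;> fin_cases j
      · show A 0 0 = Ag l m 0 0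
        rw [hA00]; rfl
      · show A 0 1 = Ag l m 0 1
        rw [hl]; rfl
      · show A 1 0 = Ag l m 1 0
        rw [hm]; rfl
      · show A 1 1 = Ag l m 1 1
        rw [hA11]; rfl
  · intro h
    have hED : E = Dg 0 0 := E_eq_Dg00 hA hB hC hD
    rcases h with ⟨l, m, rfl⟩ | ⟨l, m, rfl⟩
    · refine ⟨⟨⟨Dg l m, (id_left hA hB hC hD _).symm⟩, ⟨Dg (-l) (-m), ?_⟩⟩,
        ⟨⟨Dg l m, (id_right hA hB hC hD _).symm⟩, ⟨Dg (-l) (-m), ?_⟩⟩⟩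
      · rw [DgDg]; rw [hED]; norm_num
      · rw [DgDg]; rw [hED]; norm_num
    · refine ⟨⟨⟨Ag l m, (id_left hA hB hC hD _).symm⟩, ⟨Ag (-m) (-l), ?_⟩⟩,
        ⟨⟨Ag l m, (id_right hA hB hC hD _).symm⟩, ⟨Ag (-m) (-l), ?_⟩⟩⟩
      · rw [AgAg]; rw [hED]; norm_num
      · rw [AgAg]; rw [hED]; norm_num

end HS7
section Conc7

lemma zmod2_cases : ∀ z : ZMod 2, z = 0 ∨ z = 1 := by decide

lemma conc_S7 {E : Mat2} (hA : E 0 0 = 0) (hB : E 0 1 = ⊥) (hC : E 1 0 = ⊥)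
    (hD : E 1 1 = 0) :
    ∃ f : Mat2 → (ℝ × ℝ) × ZMod 2, Set.BijOn f (Hclass E) Set.univ ∧
      ∀ A ∈ Hclass E, ∀ B ∈ Hclass E, f (tMul A B) = wMul (f A) (f B) := by
  classical
  have hH := Hclass_S7 hA hB hC hD
  set f : Mat2 → (ℝ × ℝ) × ZMod 2 := fun A =>
    if A 0 0 = ⊥ then (((A 0 1).unbotD 0, (A 1 0).unbotD 0), 1)
    else (((A 0 0).unbotD 0, (A 1 1).unbotD 0), 0) with hf
  have fDg : ∀ l m : ℝ, f (Dg l m) = ((l, m), 0) := by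
    intro l m
    rw [hf]
    simp only
    rw [if_neg (by rw [Dg00]; exact WithBot.coe_ne_bot), Dg00, Dg11]
    rfl
  have fAg : ∀ l m : ℝ, f (Ag l m) = ((l, m), 1) := by
    intro l m
    rw [hf]
    simp only
    rw [if_pos (Ag00 l m), Ag01, Ag10]
    rfl
  refine ⟨f, ⟨fun A _ => trivial, ?_, ?_⟩, ?_⟩
  · intro A hA' B hB' heq
    rw [hH] at hA' hB'
    rcases hA' with ⟨l, m, rfl⟩ | ⟨l, m, rfl⟩ <;> rcases hB' with ⟨l', m', rfl⟩ | ⟨l', m', rfl⟩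
    · rw [fDg, fDg] at heq
      simp only [Prod.mk.injEq] at heq
      rw [heq.1.1, heq.1.2]
    · rw [fDg, fAg] at heq
      simp only [Prod.mk.injEq] at heq
      exact absurd heq.2 (by decide)
    · rw [fAg, fDg] at heq
      simp only [Prod.mk.injEq] at heq
      exact absurd heq.2 (by decide)
    · rw [fAg, fAg] at heq
      simp only [Prod.mk.injEq] at heq
      rw [heq.1.1, heq.1.2]
  · intro p _
    obtain ⟨⟨x, y⟩, z⟩ := p
    rcases zmod2_cases z with rfl | rfl
    · exact ⟨Dg x y, by rw [hH]; exact Or.inl ⟨x, y, rfl⟩, fDg x y⟩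
    · exact ⟨Ag x y, by rw [hH]; exact Or.inr ⟨x, y, rfl⟩, fAg x y⟩
  · intro A hA' B hB'
    rw [hH] at hA' hB'
    rcases hA' with ⟨l, m, rfl⟩ | ⟨l, m, rfl⟩ <;> rcases hB' with ⟨l', m', rfl⟩ | ⟨l', m', rfl⟩
    · rw [DgDg, fDg, fDg, fDg]
      simp [wMul]
    · rw [DgAg, fAg, fDg, fAg]
      simp [wMul]
    · rw [AgDg, fAg, fAg, fDg]
      simp [wMul, (by decide : (1:ZMod 2) ≠ 0)]
    · rw [AgAg, fDg, fAg, fAg]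
      simp [wMul, (by decide : (1:ZMod 2) ≠ 0), (by decide : (1:ZMod 2) + 1 = 0)]

end Conc7
section HS10

lemma add_le_self_of_nonpos {r : ℝ} (h : r ≤ 0) (x : Rb) : (r:Rb) + x ≤ x := by
  cases x with
  | none => rw [WithBot.none_eq_bot, WithBot.add_bot]
  | some a =>
    rw [WithBot.some_eq_coe, ← WithBot.coe_add, WithBot.coe_le_coe]
    linarith

lemma bot_of_add_le_bot {r : ℝ} {x : Rb} (h : (r:Rb) + x ≤ ⊥) : x = ⊥ := by
  rw [le_bot_iff, WithBot.add_eq_bot] at h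
  rcases h with h | h
  · exact absurd h WithBot.coe_ne_bot
  · exact h

lemma ne_bot_of_coe_le {r : ℝ} {x : Rb} (h : (r:Rb) ≤ x) : x ≠ ⊥ := by
  intro hb
  rw [hb, le_bot_iff] at h
  exact WithBot.coe_ne_bot h

noncomputable def Gm (b c t : ℝ) : Mat2 :=
  ![![(t:Rb), ((t-c:ℝ):Rb)], ![((t-b:ℝ):Rb), (t:Rb)]]

lemma Gm00 (b c t : ℝ) : Gm b c t 0 0 = (t:Rb) := rfl
lemma Gm01 (b c t : ℝ) : Gm b c t 0 1 = ((t-c:ℝ):Rb) := rfl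
lemma Gm10 (b c t : ℝ) : Gm b c t 1 0 = ((t-b:ℝ):Rb) := rfl
lemma Gm11 (b c t : ℝ) : Gm b c t 1 1 = (t:Rb) := rfl

variable {E : Mat2} {b c : ℝ}

lemma gm_left (hbc : b + c < 0) (hA : E 0 0 = 0) (hB : E 0 1 = (b:Rb))
    (hC : E 1 0 = (c:Rb)) (hD : E 1 1 = 0) (t : ℝ) :
    tMul E (Gm b c t) = Gm b c t := by
  refine mat_ext ?_ ?_ ?_ ?_
  · rw [tMul_apply, Gm00, Gm10, hA, hB, zero_add, ← WithBot.coe_add, bcoe_max, WithBot.coe_eq_coe]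
    rw [show b + (t - b) = t from by ring, max_self]
  · rw [tMul_apply, Gm01, Gm11, hA, hB, zero_add, ← WithBot.coe_add, bcoe_max, WithBot.coe_eq_coe]
    rw [max_eq_left (by linarith)]
  · rw [tMul_apply, Gm00, Gm10, hC, hD, zero_add, ← WithBot.coe_add, bcoe_max, WithBot.coe_eq_coe]
    rw [max_eq_right (by linarith)]
  · rw [tMul_apply, Gm01, Gm11, hC, hD, zero_add, ← WithBot.coe_add, bcoe_max, WithBot.coe_eq_coe]
    rw [show c + (t - c) = t from by ring, max_self]

lemma gm_right (hbc : b + c < 0) (hA : E 0 0 = 0) (hB : E 0 1 = (b:Rb))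
    (hC : E 1 0 = (c:Rb)) (hD : E 1 1 = 0) (t : ℝ) :
    tMul (Gm b c t) E = Gm b c t := by
  refine mat_ext ?_ ?_ ?_ ?_
  · rw [tMul_apply, Gm00, Gm01, hA, hC, add_zero, ← WithBot.coe_add, bcoe_max, WithBot.coe_eq_coe]
    rw [show t - c + c = t from by ring, max_self]
  · rw [tMul_apply, Gm00, Gm01, hB, hD, add_zero, ← WithBot.coe_add, bcoe_max, WithBot.coe_eq_coe]
    rw [max_eq_right (by linarith)]
  · rw [tMul_apply, Gm10, Gm11, hA, hC, add_zero, ← WithBot.coe_add, bcoe_max, WithBot.coe_eq_coe]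
    rw [max_eq_left (by linarith)]
  · rw [tMul_apply, Gm10, Gm11, hB, hD, add_zero, ← WithBot.coe_add, bcoe_max, WithBot.coe_eq_coe]
    rw [show t - b + b = t from by ring, max_self]

lemma gm_gm (hbc : b + c < 0) (hA : E 0 0 = 0) (hB : E 0 1 = (b:Rb))
    (hC : E 1 0 = (c:Rb)) (hD : E 1 1 = 0) (t t' : ℝ) :
    tMul (Gm b c t) (Gm b c t') = sM (t + t' - (b+c)) E := by
  refine mat_ext ?_ ?_ ?_ ?_
  · rw [tMul_apply, Gm00, Gm01, Gm00, Gm10]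
    show max ((t:Rb) + (t':Rb)) (((t-c:ℝ):Rb) + ((t'-b:ℝ):Rb)) = ((t + t' - (b+c):ℝ):Rb) + E 0 0
    rw [hA, add_zero, ← WithBot.coe_add, ← WithBot.coe_add, bcoe_max, WithBot.coe_eq_coe]
    rw [max_eq_right (by linarith)]
    ring
  · rw [tMul_apply, Gm00, Gm01, Gm01, Gm11]
    show max ((t:Rb) + ((t'-c:ℝ):Rb)) (((t-c:ℝ):Rb) + (t':Rb)) = ((t + t' - (b+c):ℝ):Rb) + E 0 1
    rw [hB, ← WithBot.coe_add, ← WithBot.coe_add, ← WithBot.coe_add, bcoe_max,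
      WithBot.coe_eq_coe]
    rw [show t + (t' - c) = t - c + t' from by ring, max_self]
    ring
  · rw [tMul_apply, Gm10, Gm11, Gm00, Gm10]
    show max (((t-b:ℝ):Rb) + (t':Rb)) ((t:Rb) + ((t'-b:ℝ):Rb)) = ((t + t' - (b+c):ℝ):Rb) + E 1 0
    rw [hC, ← WithBot.coe_add, ← WithBot.coe_add, ← WithBot.coe_add, bcoe_max,
      WithBot.coe_eq_coe]
    rw [show t - b + t' = t + (t' - b) from by ring, max_self]
    ring
  · rw [tMul_apply, Gm10, Gm11, Gm01, Gm11]
    show max (((t-b:ℝ):Rb) + ((t'-c:ℝ):Rb)) ((t:Rb) + (t':Rb)) = ((t + t' - (b+c):ℝ):Rb) + E 1 1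
    rw [hD, add_zero, ← WithBot.coe_add, ← WithBot.coe_add, bcoe_max, WithBot.coe_eq_coe]
    rw [max_eq_left (by linarith)]
    ring

lemma Hclass_S10 (hbc : b + c < 0) (hA : E 0 0 = 0) (hB : E 0 1 = (b:Rb))
    (hC : E 1 0 = (c:Rb)) (hD : E 1 1 = 0) (hE : tMul E E = E) :
    Hclass E = {A | (∃ t : ℝ, A = sM t E) ∨ (∃ t : ℝ, A = Gm b c t)} := by
  ext A
  simp only [Set.mem_setOf_eq]
  constructor
  · rintro ⟨⟨⟨X, hX⟩, ⟨Z, hZ⟩⟩, ⟨⟨Y, hY⟩, ⟨W, hW⟩⟩⟩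
    have eA : ∀ i j, A i j = max (E i 0 + X 0 j) (E i 1 + X 1 j) := entry_eq _ _ _ hX
    have eY : ∀ i j, A i j = max (Y i 0 + E 0 j) (Y i 1 + E 1 j) := entry_eq _ _ _ hY
    have eZ : ∀ i j, E i j = max (A i 0 + Z 0 j) (A i 1 + Z 1 j) := entry_eq _ _ _ hZ
    have eW : ∀ i j, E i j = max (W i 0 + A 0 j) (W i 1 + A 1 j) := entry_eq _ _ _ hW
    have ineqR1 : ∀ j, (c:Rb) + A 0 j ≤ A 1 j := by
      intro j
      rw [eA 0 j, eA 1 j, hA, hB, hC, hD, zero_add, zero_add, addb_max]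
      apply max_le
      · exact le_max_left _ _
      · refine le_trans ?_ (le_max_right _ _)
        rw [← add_assoc, ← WithBot.coe_add]
        exact add_le_self_of_nonpos (by linarith) _
    have ineqR2 : ∀ j, (b:Rb) + A 1 j ≤ A 0 j := by
      intro j
      rw [eA 0 j, eA 1 j, hA, hB, hC, hD, zero_add, zero_add, addb_max]
      apply max_le
      · refine le_trans ?_ (le_max_left _ _)
        rw [← add_assoc, ← WithBot.coe_add]
        exact add_le_self_of_nonpos (by linarith) _
      · exact le_max_right _ _
    have ineqC1 : ∀ i, (b:Rb) + A i 0 ≤ A i 1 := by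
      intro i
      rw [eY i 0, eY i 1, hA, hB, hC, hD, add_zero, add_zero, addb_max]
      apply max_le
      · rw [add_comm]
        exact le_max_left _ _
      · refine le_trans ?_ (le_max_right _ _)
        rw [add_comm (Y i 1) ((c:ℝ):Rb), ← add_assoc, ← WithBot.coe_add]
        exact add_le_self_of_nonpos (by linarith) _
    have ineqC2 : ∀ i, (c:Rb) + A i 1 ≤ A i 0 := by
      intro i
      rw [eY i 0, eY i 1, hA, hB, hC, hD, add_zero, add_zero, addb_max]
      apply max_le
      · refine le_trans ?_ (le_max_left _ _)
        rw [add_comm (Y i 0) ((b:ℝ):Rb), ← add_assoc, ← WithBot.coe_add]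
        exact add_le_self_of_nonpos (by linarith) _
      · rw [add_comm]
        exact le_max_right _ _
    have hA00ne : A 0 0 ≠ ⊥ := by
      intro h0
      have h1 : A 1 0 = ⊥ := bot_of_add_le_bot (h0 ▸ ineqR2 0)
      have h2 : A 0 1 = ⊥ := bot_of_add_le_bot (h0 ▸ ineqC2 0)
      have h3 : A 1 1 = ⊥ := bot_of_add_le_bot (h2 ▸ ineqR2 1)
      have h4 := eZ 0 0
      rw [hA, h0, h2, WithBot.bot_add, WithBot.bot_add, bmaxl] at h4
      exact absurd h4 (by simp)
    obtain ⟨p, hp0⟩ := WithBot.ne_bot_iff_exists.mp hA00ne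
    have hp : A 0 0 = (p:Rb) := hp0.symm
    have hr' : ((c + p : ℝ):Rb) ≤ A 1 0 := by
      rw [WithBot.coe_add, hp0]; exact ineqR1 0
    obtain ⟨r, hr0⟩ := WithBot.ne_bot_iff_exists.mp (ne_bot_of_coe_le hr')
    have hr : A 1 0 = (r:Rb) := hr0.symm
    have hq' : ((b + p : ℝ):Rb) ≤ A 0 1 := by
      rw [WithBot.coe_add, hp0]; exact ineqC1 0
    obtain ⟨q, hq0⟩ := WithBot.ne_bot_iff_exists.mp (ne_bot_of_coe_le hq')
    have hq : A 0 1 = (q:Rb) := hq0.symm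
    have hs' : ((c + q : ℝ):Rb) ≤ A 1 1 := by
      rw [WithBot.coe_add, hq0]; exact ineqR1 1
    obtain ⟨s, hs0⟩ := WithBot.ne_bot_iff_exists.mp (ne_bot_of_coe_le hs')
    have hs : A 1 1 = (s:Rb) := hs0.symm
    have i1 : c + p ≤ r := by
      have h := ineqR1 0; rw [hp, hr, ← WithBot.coe_add] at h; exact_mod_cast h
    have i2 : b + r ≤ p := by
      have h := ineqR2 0; rw [hp, hr, ← WithBot.coe_add] at h; exact_mod_cast h
    have i3 : c + q ≤ s := by
      have h := ineqR1 1; rw [hq, hs, ← WithBot.coe_add] at h; exact_mod_cast h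
    have i4 : b + s ≤ q := by
      have h := ineqR2 1; rw [hq, hs, ← WithBot.coe_add] at h; exact_mod_cast h
    have i5 : b + p ≤ q := by
      have h := ineqC1 0; rw [hp, hq, ← WithBot.coe_add] at h; exact_mod_cast h
    have i6 : c + q ≤ p := by
      have h := ineqC2 0; rw [hp, hq, ← WithBot.coe_add] at h; exact_mod_cast h
    have i7 : b + r ≤ s := by
      have h := ineqC1 1; rw [hr, hs, ← WithBot.coe_add] at h; exact_mod_cast h
    have i8 : c + s ≤ r := by
      have h := ineqC2 1; rw [hr, hs, ← WithBot.coe_add] at h; exact_mod_cast h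
    have d1 : r = p + c ∨ s = q + c := by
      have ez00 : max (A 0 0 + Z 0 0) (A 0 1 + Z 1 0) = 0 := by rw [← eZ 0 0, hA]
      have ez10 : max (A 1 0 + Z 0 0) (A 1 1 + Z 1 0) = (c:Rb) := by rw [← eZ 1 0, hC]
      rcases max_eq_iff.mp ez00 with ⟨h, -⟩ | ⟨h, -⟩
      · left
        obtain ⟨p', z0, hp', hz0, hpz⟩ := addb_eq_zero _ _ h
        have hpp : p' = p := by rw [hp] at hp'; exact_mod_cast hp'.symm
        have hle : A 1 0 + Z 0 0 ≤ (c:Rb) := (le_max_left _ _).trans_eq ez10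
        rw [hr, hz0, ← WithBot.coe_add] at hle
        have hle' : r + z0 ≤ c := by exact_mod_cast hle
        exact le_antisymm (by linarith) (by linarith)
      · right
        obtain ⟨q', z0, hq', hz0, hpz⟩ := addb_eq_zero _ _ h
        have hqq : q' = q := by rw [hq] at hq'; exact_mod_cast hq'.symm
        have hle : A 1 1 + Z 1 0 ≤ (c:Rb) := (le_max_right _ _).trans_eq ez10
        rw [hs, hz0, ← WithBot.coe_add] at hle
        have hle' : s + z0 ≤ c := by exact_mod_cast hle
        exact le_antisymm (by linarith) (by linarith)
    have d2 : p = r + b ∨ q = s + b := by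
      have ez11 : max (A 1 0 + Z 0 1) (A 1 1 + Z 1 1) = 0 := by rw [← eZ 1 1, hD]
      have ez01 : max (A 0 0 + Z 0 1) (A 0 1 + Z 1 1) = (b:Rb) := by rw [← eZ 0 1, hB]
      rcases max_eq_iff.mp ez11 with ⟨h, -⟩ | ⟨h, -⟩
      · left
        obtain ⟨r', z0, hr', hz0, hpz⟩ := addb_eq_zero _ _ h
        have hrr : r' = r := by rw [hr] at hr'; exact_mod_cast hr'.symm
        have hle : A 0 0 + Z 0 1 ≤ (b:Rb) := (le_max_left _ _).trans_eq ez01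
        rw [hp, hz0, ← WithBot.coe_add] at hle
        have hle' : p + z0 ≤ b := by exact_mod_cast hle
        exact le_antisymm (by linarith) (by linarith)
      · right
        obtain ⟨s', z0, hs', hz0, hpz⟩ := addb_eq_zero _ _ h
        have hss : s' = s := by rw [hs] at hs'; exact_mod_cast hs'.symm
        have hle : A 0 1 + Z 1 1 ≤ (b:Rb) := (le_max_right _ _).trans_eq ez01
        rw [hq, hz0, ← WithBot.coe_add] at hle
        have hle' : q + z0 ≤ b := by exact_mod_cast hle
        exact le_antisymm (by linarith) (by linarith)
    have d3 : q = p + b ∨ s = r + b := by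
      have ew00 : max (W 0 0 + A 0 0) (W 0 1 + A 1 0) = 0 := by rw [← eW 0 0, hA]
      have ew01 : max (W 0 0 + A 0 1) (W 0 1 + A 1 1) = (b:Rb) := by rw [← eW 0 1, hB]
      rcases max_eq_iff.mp ew00 with ⟨h, -⟩ | ⟨h, -⟩
      · left
        obtain ⟨w0, p', hw0, hp', hpz⟩ := addb_eq_zero _ _ h
        have hpp : p' = p := by rw [hp] at hp'; exact_mod_cast hp'.symm
        have hle : W 0 0 + A 0 1 ≤ (b:Rb) := (le_max_left _ _).trans_eq ew01
        rw [hq, hw0, ← WithBot.coe_add] at hle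
        have hle' : w0 + q ≤ b := by exact_mod_cast hle
        exact le_antisymm (by linarith) (by linarith)
      · right
        obtain ⟨w1, r', hw1, hr', hpz⟩ := addb_eq_zero _ _ h
        have hrr : r' = r := by rw [hr] at hr'; exact_mod_cast hr'.symm
        have hle : W 0 1 + A 1 1 ≤ (b:Rb) := (le_max_right _ _).trans_eq ew01
        rw [hs, hw1, ← WithBot.coe_add] at hle
        have hle' : w1 + s ≤ b := by exact_mod_cast hle
        exact le_antisymm (by linarith) (by linarith)
    have d4 : p = q + c ∨ r = s + c := by
      have ew11 : max (W 1 0 + A 0 1) (W 1 1 + A 1 1) = 0 := by rw [← eW 1 1, hD]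
      have ew10 : max (W 1 0 + A 0 0) (W 1 1 + A 1 0) = (c:Rb) := by rw [← eW 1 0, hC]
      rcases max_eq_iff.mp ew11 with ⟨h, -⟩ | ⟨h, -⟩
      · left
        obtain ⟨w0, q', hw0, hq', hpz⟩ := addb_eq_zero _ _ h
        have hqq : q' = q := by rw [hq] at hq'; exact_mod_cast hq'.symm
        have hle : W 1 0 + A 0 0 ≤ (c:Rb) := (le_max_left _ _).trans_eq ew10
        rw [hp, hw0, ← WithBot.coe_add] at hle
        have hle' : w0 + p ≤ c := by exact_mod_cast hle
        exact le_antisymm (by linarith) (by linarith)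
      · right
        obtain ⟨w1, s', hw1, hs', hpz⟩ := addb_eq_zero _ _ h
        have hss : s' = s := by rw [hs] at hs'; exact_mod_cast hs'.symm
        have hle : W 1 1 + A 1 0 ≤ (c:Rb) := (le_max_right _ _).trans_eq ew10
        rw [hr, hw1, ← WithBot.coe_add] at hle
        have hle' : w1 + r ≤ c := by exact_mod_cast hle
        exact le_antisymm (by linarith) (by linarith)
    rcases d1 with d1 | d1 <;> rcases d2 with d2 | d2 <;> rcases d3 with d3 | d3 <;>
      rcases d4 with d4 | d4 <;>
      first
      | exact Or.inl ⟨p, mat_ext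
          (by rw [hp]; show (p:Rb) = (p:Rb) + E 0 0; rw [hA, add_zero])
          (by rw [hq]; show (q:Rb) = (p:Rb) + E 0 1;
              rw [hB, ← WithBot.coe_add, WithBot.coe_eq_coe]; linarith)
          (by rw [hr]; show (r:Rb) = (p:Rb) + E 1 0;
              rw [hC, ← WithBot.coe_add, WithBot.coe_eq_coe]; linarith)
          (by rw [hs]; show (s:Rb) = (p:Rb) + E 1 1;
              rw [hD, add_zero, WithBot.coe_eq_coe]; linarith)⟩
      | exact Or.inr ⟨p, mat_ext
          (by rw [hp]; exact (Gm00 b c p).symm)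
          (by rw [hq, Gm01, WithBot.coe_eq_coe]; linarith)
          (by rw [hr, Gm10, WithBot.coe_eq_coe]; linarith)
          (by rw [hs, Gm11, WithBot.coe_eq_coe]; linarith)⟩
  · rintro (⟨t, rfl⟩ | ⟨t, rfl⟩)
    · exact sM_mem_Hclass hE t
    · have key : ∀ t₁ t₂ : ℝ, t₁ + t₂ = b + c → E = tMul (Gm b c t₁) (Gm b c t₂) := by
        intro t₁ t₂ ht
        rw [gm_gm hbc hA hB hC hD, show t₁ + t₂ - (b+c) = 0 from by linarith, sM_zero]
      exact ⟨⟨⟨Gm b c t, (gm_left hbc hA hB hC hD t).symm⟩,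
          ⟨Gm b c (b + c - t), key t (b+c-t) (by ring)⟩⟩,
        ⟨⟨Gm b c t, (gm_right hbc hA hB hC hD t).symm⟩,
          ⟨Gm b c (b + c - t), key (b+c-t) t (by ring)⟩⟩⟩

end HS10
section Conc10

variable {E : Mat2} {b c : ℝ}

lemma sM_Gm (t t' : ℝ) : sM t (Gm b c t') = Gm b c (t + t') := by
  refine mat_ext ?_ ?_ ?_ ?_
  · show (t:Rb) + Gm b c t' 0 0 = Gm b c (t+t') 0 0
    rw [Gm00, Gm00, ← WithBot.coe_add]
  · show (t:Rb) + Gm b c t' 0 1 = Gm b c (t+t') 0 1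
    rw [Gm01, Gm01, ← WithBot.coe_add, WithBot.coe_eq_coe]; ring
  · show (t:Rb) + Gm b c t' 1 0 = Gm b c (t+t') 1 0
    rw [Gm10, Gm10, ← WithBot.coe_add, WithBot.coe_eq_coe]; ring
  · show (t:Rb) + Gm b c t' 1 1 = Gm b c (t+t') 1 1
    rw [Gm11, Gm11, ← WithBot.coe_add]

lemma conc_S10 (hbc : b + c < 0) (hA : E 0 0 = 0) (hB : E 0 1 = (b:Rb))
    (hC : E 1 0 = (c:Rb)) (hD : E 1 1 = 0) (hE : tMul E E = E) :
    ∃ f : Mat2 → ℝ × ZMod 2, Set.BijOn f (Hclass E) Set.univ ∧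
      ∀ A ∈ Hclass E, ∀ B ∈ Hclass E, f (tMul A B) = f A + f B := by
  classical
  have hH := Hclass_S10 hbc hA hB hC hD hE
  set f : Mat2 → ℝ × ZMod 2 := fun A =>
    if A 0 1 = A 0 0 + (b:Rb) then ((A 0 0).unbotD 0, 0)
    else ((A 0 0).unbotD 0 - (b+c)/2, 1) with hf
  have fsM : ∀ t : ℝ, f (sM t E) = (t, 0) := by
    intro t
    rw [hf]
    simp only
    rw [if_pos (by show (t:Rb) + E 0 1 = (t:Rb) + E 0 0 + (b:Rb); rw [hA, hB, add_zero])]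
    show ((((t:Rb) + E 0 0).unbotD 0 : ℝ), (0 : ZMod 2)) = (t, 0)
    rw [hA, add_zero]
    rfl
  have fGm : ∀ t : ℝ, f (Gm b c t) = (t - (b+c)/2, 1) := by
    intro t
    rw [hf]
    simp only
    rw [if_neg (by
      rw [Gm01, Gm00, ← WithBot.coe_add, WithBot.coe_eq_coe]
      intro h
      have : b + c = 0 := by linarith
      linarith)]
    rw [Gm00]
    rfl
  have prod1 : ∀ t t' : ℝ, tMul (sM t E) (sM t' E) = sM (t + t') E := by
    intro t t'
    rw [tMul_sM_left, tMul_sM_right, sM_sM, hE]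
  have prod2 : ∀ t t' : ℝ, tMul (sM t E) (Gm b c t') = Gm b c (t + t') := by
    intro t t'
    rw [tMul_sM_left, gm_left hbc hA hB hC hD, sM_Gm]
  have prod3 : ∀ t t' : ℝ, tMul (Gm b c t) (sM t' E) = Gm b c (t + t') := by
    intro t t'
    rw [tMul_sM_right, gm_right hbc hA hB hC hD, sM_Gm, add_comm]
  have prod4 : ∀ t t' : ℝ, tMul (Gm b c t) (Gm b c t') = sM (t + t' - (b+c)) E :=
    gm_gm hbc hA hB hC hD
  refine ⟨f, ⟨fun A _ => trivial, ?_, ?_⟩, ?_⟩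
  · intro A hA' B hB' heq
    rw [hH] at hA' hB'
    rcases hA' with ⟨t, rfl⟩ | ⟨t, rfl⟩ <;> rcases hB' with ⟨t', rfl⟩ | ⟨t', rfl⟩
    · rw [fsM, fsM] at heq
      simp only [Prod.mk.injEq] at heq
      rw [heq.1]
    · rw [fsM, fGm] at heq
      simp only [Prod.mk.injEq] at heq
      exact absurd heq.2 (by decide)
    · rw [fGm, fsM] at heq
      simp only [Prod.mk.injEq] at heq
      exact absurd heq.2 (by decide)
    · rw [fGm, fGm] at heq
      simp only [Prod.mk.injEq] at heq
      rw [show t = t' from by have := heq.1; linarith]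
  · intro p _
    obtain ⟨x, z⟩ := p
    rcases zmod2_cases z with rfl | rfl
    · exact ⟨sM x E, by rw [hH]; exact Or.inl ⟨x, rfl⟩, fsM x⟩
    · refine ⟨Gm b c (x + (b+c)/2), by rw [hH]; exact Or.inr ⟨_, rfl⟩, ?_⟩
      rw [fGm, show x + (b+c)/2 - (b+c)/2 = x from by ring]
  · intro A hA' B hB'
    rw [hH] at hA' hB'
    rcases hA' with ⟨t, rfl⟩ | ⟨t, rfl⟩ <;> rcases hB' with ⟨t', rfl⟩ | ⟨t', rfl⟩
    · rw [prod1, fsM, fsM, fsM, Prod.mk_add_mk]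
      norm_num
    · rw [prod2, fsM, fGm, fGm, Prod.mk_add_mk]
      simp only [Prod.mk.injEq]
      exact ⟨by ring, by decide⟩
    · rw [prod3, fGm, fsM, fGm, Prod.mk_add_mk]
      simp only [Prod.mk.injEq]
      exact ⟨by ring, by decide⟩
    · rw [prod4, fGm, fGm, fsM, Prod.mk_add_mk]
      simp only [Prod.mk.injEq]
      exact ⟨by ring, by decide⟩

end Conc10

/-- the structure of the maximal subgroups of `M₂(ℝ̄)`, i.e. of the
`𝓗`-classes of idempotents (each such class being a group under `⊗` with identity `E`):
(i) if `PC(E) = ∅` the group is trivial; (ii) if `PC(E)` is a singleton, or a closed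
interval with exactly one real and one infinite endpoint, it is isomorphic to `(ℝ, +)`;
(iii) if `PC(E)` is a closed interval with two real endpoints, it is isomorphic to
`ℝ × ℤ/2ℤ`; (iv) if `PC(E) = ℝ̂`, it is isomorphic to the wreath product `ℝ ≀ ℤ/2ℤ`.
Isomorphism is expressed by a bijection from the `𝓗`-class to the target group carrying
`⊗` to the group operation. -/
theorem maximal_subgroups (E : Mat2) (hE : tMul E E = E) :
    (PC E = ∅ → Hclass E = {E}) ∧
    (((∃ x : EReal, PC E = {x}) ∨
        (∃ a : ℝ, PC E = Set.Icc ⊥ (a : EReal) ∨ PC E = Set.Icc (a : EReal) ⊤)) →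
      ∃ f : Mat2 → ℝ, Set.BijOn f (Hclass E) Set.univ ∧
        ∀ A ∈ Hclass E, ∀ B ∈ Hclass E, f (tMul A B) = f A + f B) ∧
    ((∃ x y : ℝ, x < y ∧ PC E = Set.Icc (x : EReal) (y : EReal)) →
      ∃ f : Mat2 → ℝ × ZMod 2, Set.BijOn f (Hclass E) Set.univ ∧
        ∀ A ∈ Hclass E, ∀ B ∈ Hclass E, f (tMul A B) = f A + f B) ∧
    (PC E = Set.univ →
      ∃ f : Mat2 → (ℝ × ℝ) × ZMod 2, Set.BijOn f (Hclass E) Set.univ ∧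
        ∀ A ∈ Hclass E, ∀ B ∈ Hclass E, f (tMul A B) = wMul (f A) (f B)) := by
  refine ⟨?_, ?_, ?_, ?_⟩
  · -- part (i)
    intro hPC
    have hbot : ∀ i j, E i j = ⊥ := by
      intro i j
      by_contra hne
      obtain ⟨z, hz⟩ := pc_nonempty E i j hne
      rw [hPC] at hz
      exact hz
    ext A
    simp only [Set.mem_singleton_iff]
    constructor
    · rintro ⟨⟨⟨X, hX⟩, -⟩, -⟩
      rw [hX]
      funext i j
      rw [tMul_apply, hbot i 0, hbot i 1, WithBot.bot_add, WithBot.bot_add, bmaxl]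
      exact (hbot i j).symm
    · intro hAE
      rw [hAE]
      exact ⟨⟨⟨E, hE.symm⟩, ⟨E, hE.symm⟩⟩, ⟨⟨E, hE.symm⟩, ⟨E, hE.symm⟩⟩⟩
  · -- part (ii)
    intro hyp
    rcases classify E hE with hz | ⟨u, v, huv, hEuv⟩ | ⟨b, hA, hB, hC, hD⟩ |
      ⟨c, hA, hB, hC, hD⟩ | ⟨b, c, hbc, hA, hB, hC, hD⟩ | ⟨hA, hB, hC, hD⟩
    · exfalso
      have h0 := pc_zero E hz
      rcases hyp with ⟨x, hx⟩ | ⟨a, ha | ha⟩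
      · have hmem : x ∈ PC E := by rw [hx]; exact rfl
        rw [h0] at hmem; exact hmem
      · have hmem : (⊥:EReal) ∈ PC E := by
          rw [ha]; exact Set.mem_Icc.mpr ⟨le_rfl, bot_le⟩
        rw [h0] at hmem; exact hmem
      · have hmem : ((a:ℝ):EReal) ∈ PC E := by
          rw [ha]; exact Set.mem_Icc.mpr ⟨le_rfl, le_top⟩
        rw [h0] at hmem; exact hmem
    · obtain ⟨k, hk⟩ : ∃ k : Fin 2, v k + u k = 0 := by
        rcases max_eq_iff.mp huv with ⟨h, -⟩ | ⟨h, -⟩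
        exacts [⟨0, h⟩, ⟨1, h⟩]
      have hkk : E k k = 0 := by rw [hEuv k k, add_comm]; exact hk
      exact shifts_conc E hE k hkk (Hclass_rank1 E u v huv hEuv hE)
    · exact shifts_conc E hE 0 hA (Hclass_S8 E b hA hB hC hD hE)
    · exact shifts_conc E hE 0 hA (Hclass_S9 E c hA hB hC hD hE)
    · exfalso
      have hcm : ((c:ℝ):EReal) ∈ PC E := pc_coe_mem_c E c hA hC
      have hbm : ((-b:ℝ):EReal) ∈ PC E := pc_coe_mem_b E b hB hD
      have hnb : ⊥ ∉ PC E := pc_bot_not_mem E (by rw [hC]; simp) (by rw [hD]; simp)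
      have hnt : ⊤ ∉ PC E := pc_top_not_mem E (by rw [hA]; simp) (by rw [hB]; simp)
      rcases hyp with ⟨x, hx⟩ | ⟨a, ha | ha⟩
      · rw [hx, Set.mem_singleton_iff] at hcm hbm
        have : ((c:ℝ):EReal) = ((-b:ℝ):EReal) := hcm.trans hbm.symm
        have : c = -b := by exact_mod_cast this
        linarith
      · rw [ha] at hnb
        exact hnb (Set.mem_Icc.mpr ⟨le_rfl, bot_le⟩)
      · rw [ha] at hnt
        exact hnt (Set.mem_Icc.mpr ⟨le_top, le_rfl⟩)
    · exfalso
      have hbm : (⊥:EReal) ∈ PC E := pc_bot_mem E hA hC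
      have htm : (⊤:EReal) ∈ PC E := pc_top_mem E hB hD
      rcases hyp with ⟨x, hx⟩ | ⟨a, ha | ha⟩
      · rw [hx, Set.mem_singleton_iff] at hbm htm
        exact bot_ne_top (hbm.trans htm.symm)
      · rw [ha] at htm
        have := (Set.mem_Icc.mp htm).2
        exact EReal.coe_ne_top a (top_le_iff.mp this)
      · rw [ha] at hbm
        have := (Set.mem_Icc.mp hbm).1
        exact EReal.coe_ne_bot a (le_bot_iff.mp this)
  · -- part (iii)
    rintro ⟨x, y, hxy, hPC⟩
    have hxmem : ((x:ℝ):EReal) ∈ PC E := by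
      rw [hPC]; exact Set.mem_Icc.mpr ⟨le_rfl, by exact_mod_cast hxy.le⟩
    have hymem : ((y:ℝ):EReal) ∈ PC E := by
      rw [hPC]; exact Set.mem_Icc.mpr ⟨by exact_mod_cast hxy.le, le_rfl⟩
    rcases classify E hE with hz | ⟨u, v, huv, hEuv⟩ | ⟨b, hA, hB, hC, hD⟩ |
      ⟨c, hA, hB, hC, hD⟩ | ⟨b, c, hbc, hA, hB, hC, hD⟩ | ⟨hA, hB, hC, hD⟩
    · exfalso
      rw [pc_zero E hz] at hxmem
      exact hxmem
    · exfalso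
      have h1 := pc_rank1 E u v hEuv _ hxmem
      have h2 := pc_rank1 E u v hEuv _ hymem
      have : ((x:ℝ):EReal) = ((y:ℝ):EReal) := h1.trans h2.symm
      have : x = y := by exact_mod_cast this
      linarith
    · exfalso
      have hbm : (⊥:EReal) ∈ PC E := pc_bot_mem E hA hC
      rw [hPC] at hbm
      have := (Set.mem_Icc.mp hbm).1
      exact EReal.coe_ne_bot x (le_bot_iff.mp this)
    · exfalso
      have htm : (⊤:EReal) ∈ PC E := pc_top_mem E hB hD
      rw [hPC] at htm
      have := (Set.mem_Icc.mp htm).2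
      exact EReal.coe_ne_top y (top_le_iff.mp this)
    · exact conc_S10 hbc hA hB hC hD hE
    · exfalso
      have hbm : (⊥:EReal) ∈ PC E := pc_bot_mem E hA hC
      rw [hPC] at hbm
      have := (Set.mem_Icc.mp hbm).1
      exact EReal.coe_ne_bot x (le_bot_iff.mp this)
  · -- part (iv)
    intro hPC
    rcases classify E hE with hz | ⟨u, v, huv, hEuv⟩ | ⟨b, hA, hB, hC, hD⟩ |
      ⟨c, hA, hB, hC, hD⟩ | ⟨b, c, hbc, hA, hB, hC, hD⟩ | ⟨hA, hB, hC, hD⟩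
    · exfalso
      have : (⊥:EReal) ∈ PC E := by rw [hPC]; trivial
      rw [pc_zero E hz] at this
      exact this
    · exfalso
      have h1 : (⊥:EReal) ∈ PC E := by rw [hPC]; trivial
      have h2 : (⊤:EReal) ∈ PC E := by rw [hPC]; trivial
      exact bot_ne_top ((pc_rank1 E u v hEuv _ h1).trans (pc_rank1 E u v hEuv _ h2).symm)
    · exfalso
      have hnt : ⊤ ∉ PC E := pc_top_not_mem E (by rw [hA]; simp) (by rw [hB]; simp)
      exact hnt (by rw [hPC]; trivial)
    · exfalso
      have hnb : ⊥ ∉ PC E := pc_bot_not_mem E (by rw [hC]; simp) (by rw [hD]; simp)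
      exact hnb (by rw [hPC]; trivial)
    · exfalso
      have hnb : ⊥ ∉ PC E := pc_bot_not_mem E (by rw [hC]; simp) (by rw [hD]; simp)
      exact hnb (by rw [hPC]; trivial)
    · exact conc_S7 hA hB hC hD
end
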